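/- arXiv:2412.02866 — 4 statements merged into one kernel-verified Lean document; each statement's English description precedes it below -/
import Mathlib

section
/- Let d ≥ 2 be an integer, let a₁, …, a_d be integers, not all zero, with greatest common divisor 1, let s = max_i |a_i|, and let n ≥ s be a positive integer. Let 𝓛 = {(x₁, …, x_d) ∈ ℤ^d : a₁x₁ + ⋯ + a_d x_d = 0}. If the set 𝓛 ∩ [n]^d spans a (d−1)-dimensional linear subspace of ℝ^d, then |𝓛 ∩ [n]^d| ≤ 3^d · n^{d−1} / s. -/
noncomputable section

lemma one_var (n m g k : ℕ) (hn : 0 < n) (hm : 0 < m) (b c : ℤ)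
    (hg : g = Int.gcd b m) (hk : k = m / g) :
    ((Finset.Icc (1:ℤ) (n:ℤ)).filter (fun v => (m:ℤ) ∣ b * v - c)).card * k ≤ n + k := by
  have hg0 : 0 < g := by
    subst hg; exact Int.gcd_pos_iff.mpr (Or.inr (by exact_mod_cast hm.ne'))
  have hgm : g ∣ m := by
    have h := Int.gcd_dvd_right (a := b) (b := (m:ℤ))
    rw [← hg] at h
    exact_mod_cast h
  have hkg : k * g = m := by subst hk; exact Nat.div_mul_cancel hgm
  have hk0 : 0 < k := by
    rcases Nat.eq_zero_or_pos k with h | h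
    · subst h; simp at hkg; omega
    · exact h
  have hbg : (g:ℤ) ∣ b := by
    have h := Int.gcd_dvd_left (a := b) (b := (m:ℤ))
    rwa [← hg] at h
  have hmz : ((k:ℤ)) = (m:ℤ) / (g:ℤ) := by
    have : ((k:ℤ)) * g = m := by exact_mod_cast hkg
    rw [← this, Int.mul_ediv_cancel _ (by exact_mod_cast hg0.ne')]
  have hco : IsCoprime ((k:ℤ)) (b / g) := by
    have h := Int.gcd_div_gcd_div_gcd (i := b) (j := (m:ℤ)) (by rw [← hg]; exact hg0)
    rw [← hg] at h
    rw [Int.isCoprime_iff_gcd_eq_one, Int.gcd_comm, hmz]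
    exact h
  have hdvd : ∀ v₁, (m:ℤ) ∣ b * v₁ - c → ∀ v₂, (m:ℤ) ∣ b * v₂ - c → (k:ℤ) ∣ v₁ - v₂ := by
    intro v₁ h₁ v₂ h₂
    have hmd : (m:ℤ) ∣ b * (v₁ - v₂) := by
      have := dvd_sub h₁ h₂
      simpa [mul_sub] using this
    obtain ⟨b', hb'⟩ := hbg
    rw [hb'] at hmd
    have hb'' : b / (g:ℤ) = b' := by rw [hb', Int.mul_ediv_cancel_left _ (by exact_mod_cast hg0.ne')]
    have hkb : (k:ℤ) ∣ b' * (v₁ - v₂) := by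
      have h2 : (g:ℤ) * (k:ℤ) ∣ (g:ℤ) * (b' * (v₁ - v₂)) := by
        rw [← mul_assoc]
        calc (g:ℤ) * (k:ℤ) = (m:ℤ) := by push_cast [← hkg]; ring
          _ ∣ (g:ℤ) * b' * (v₁ - v₂) := hmd
      exact (mul_dvd_mul_iff_left (by exact_mod_cast hg0.ne' : (g:ℤ) ≠ 0)).mp h2
    exact hco.dvd_of_dvd_mul_left (by rw [hb'']; exact hkb)
  have hcard : ((Finset.Icc (1:ℤ) (n:ℤ)).filter (fun v => (m:ℤ) ∣ b * v - c)).card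
      ≤ (Finset.Icc (0:ℤ) (((n:ℤ) - 1) / k)).card := by
    refine Finset.card_le_card_of_injOn (fun v => (v - 1) / (k:ℤ)) ?_ ?_
    · intro v hv
      rw [Finset.mem_coe, Finset.mem_filter, Finset.mem_Icc] at hv
      rw [Finset.mem_coe, Finset.mem_Icc]
      constructor
      · exact Int.ediv_nonneg (by linarith [hv.1.1]) (by positivity)
      · exact Int.ediv_le_ediv (by exact_mod_cast hk0) (by linarith [hv.1.2])
    · intro v₁ h₁ v₂ h₂ heq
      simp only [Finset.coe_filter, Set.mem_setOf_eq, Finset.mem_Icc] at h₁ h₂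
      simp only at heq
      have hd := hdvd v₁ h₁.2 v₂ h₂.2
      have hmod : (v₁ - 1) % k = (v₂ - 1) % k := by
        rw [Int.emod_eq_emod_iff_emod_sub_eq_zero]
        have he : (v₁ - 1) - (v₂ - 1) = v₁ - v₂ := by ring
        rw [he]
        exact Int.emod_eq_zero_of_dvd hd
      have e₁ := Int.mul_ediv_add_emod (v₁ - 1) k
      have e₂ := Int.mul_ediv_add_emod (v₂ - 1) k
      rw [heq] at e₁
      rw [hmod] at e₁
      linarith
  rw [Int.card_Icc] at hcard
  have hq0 : 0 ≤ ((n:ℤ) - 1) / k :=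
    Int.ediv_nonneg (by simp; exact_mod_cast hn) (by positivity)
  have hqk : ((n:ℤ) - 1) / k * k ≤ (n:ℤ) - 1 := by
    have := Int.mul_ediv_add_emod ((n:ℤ) - 1) k
    have hr := Int.emod_nonneg ((n:ℤ) - 1) (by exact_mod_cast hk0.ne' : (k:ℤ) ≠ 0)
    linarith
  have hc' : ((((Finset.Icc (1:ℤ) (n:ℤ)).filter (fun v => (m:ℤ) ∣ b * v - c)).card : ℤ))
      ≤ ((n:ℤ) - 1) / k + 1 := by
    have ht : ((((n:ℤ) - 1) / k + 1 - 0).toNat : ℤ) = ((n:ℤ) - 1) / k + 1 := by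
      rw [Int.toNat_of_nonneg (by linarith)]; ring
    omega
  have hfinal : ((((Finset.Icc (1:ℤ) (n:ℤ)).filter (fun v => (m:ℤ) ∣ b * v - c)).card : ℤ)) * k
      ≤ (n:ℤ) + k := by
    calc _ ≤ (((n:ℤ) - 1) / k + 1) * k := mul_le_mul_of_nonneg_right hc' (by positivity)
      _ = ((n:ℤ) - 1) / k * k + k := by ring
      _ ≤ (n:ℤ) + k := by linarith
  exact_mod_cast hfinal

variable {ι : Type*} [Fintype ι] [DecidableEq ι]

def box (t : Finset ι) (n : ℕ) : Finset (ι → ℤ) :=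
  Fintype.piFinset fun i => if i ∈ t then Finset.Icc 1 (n:ℤ) else {0}


lemma key (n : ℕ) (hn : 0 < n) (b : ι → ℤ) (t : Finset ι) :
    ∀ (m : ℕ) (c : ℤ), 0 < m → Int.gcd (t.gcd b) m = 1 →
    ((box t n).filter (fun y => (m:ℤ) ∣ (∑ i ∈ t, b i * y i) - c)).card * m * n
      ≤ 3 ^ t.card * (n ^ (t.card + 1) + n ^ t.card * m) := by
  induction t using Finset.induction_on with
  | empty =>
    intro m c hm hgcd
    have hm1 : m = 1 := by
      rw [Finset.gcd_empty] at hgcd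
      simpa using hgcd
    subst hm1
    have hb : (box (∅ : Finset ι) n).card = 1 := by
      rw [box, Fintype.card_piFinset]
      simp
    have h1 : ((box (∅ : Finset ι) n).filter
        (fun y => ((1:ℕ):ℤ) ∣ (∑ i ∈ (∅ : Finset ι), b i * y i) - c)).card ≤ 1 :=
      hb ▸ Finset.card_filter_le _ _
    calc _ ≤ 1 * 1 * n := Nat.mul_le_mul (Nat.mul_le_mul h1 le_rfl) le_rfl
      _ ≤ 3 ^ (∅ : Finset ι).card * (n ^ ((∅ : Finset ι).card + 1) + n ^ (∅ : Finset ι).card * 1) := by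
          simp
  | @insert i t hit IH =>
    intro m c hm hgcd
    set g := Int.gcd (b i) (m:ℤ) with hgdef
    have hg0 : 0 < g := Int.gcd_pos_iff.mpr (Or.inr (by exact_mod_cast hm.ne'))
    have hgm : g ∣ m := by
      have h := Int.gcd_dvd_right (a := b i) (b := (m:ℤ)); exact_mod_cast h
    have hbig : (g:ℤ) ∣ b i := Int.gcd_dvd_left _ _
    set k := m / g with hkdef
    have hkg : k * g = m := Nat.div_mul_cancel hgm
    have hk0 : 0 < k := by
      rcases Nat.eq_zero_or_pos k with h | h
      · exfalso; rw [← hkg, h] at hm; simp at hm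
      · exact h
    -- gcd condition for IH
    have hgcd' : Int.gcd (t.gcd b) g = 1 := by
      have hD : ((Int.gcd (t.gcd b) (g:ℤ) : ℤ)) ∣ 1 := by
        have d1 : ((Int.gcd (t.gcd b) (g:ℤ) : ℤ)) ∣ t.gcd b := Int.gcd_dvd_left _ _
        have d2 : ((Int.gcd (t.gcd b) (g:ℤ) : ℤ)) ∣ (g:ℤ) := Int.gcd_dvd_right _ _
        have d3 : ((Int.gcd (t.gcd b) (g:ℤ) : ℤ)) ∣ b i := d2.trans hbig
        have d4 : ((Int.gcd (t.gcd b) (g:ℤ) : ℤ)) ∣ (m:ℤ) := d2.trans (by exact_mod_cast hgm)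
        have d5 : ((Int.gcd (t.gcd b) (g:ℤ) : ℤ)) ∣ gcd (b i) (t.gcd b) := dvd_gcd d3 d1
        have d6 := Int.dvd_coe_gcd d5 d4
        rw [← Finset.gcd_insert, hgcd] at d6; exact_mod_cast d6
      have := Int.eq_one_of_dvd_one (by positivity) hD
      exact_mod_cast this
    set src := (box (insert i t) n).filter
        (fun y => (m:ℤ) ∣ (∑ j ∈ insert i t, b j * y j) - c) with hsrc
    set tgt := (box t n).filter (fun z => (g:ℤ) ∣ (∑ j ∈ t, b j * z j) - c) with htgt
    have hyupd : ∀ y : ι → ℤ, ∑ j ∈ t, b j * Function.update y i 0 j = ∑ j ∈ t, b j * y j := by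
      intro y
      refine Finset.sum_congr rfl fun j hj => ?_
      rw [Function.update_of_ne (fun h : j = i => hit (h ▸ hj))]
    have hmap : ∀ y ∈ src, Function.update y i 0 ∈ tgt := by
      intro y hy
      rw [hsrc, Finset.mem_filter] at hy
      obtain ⟨hybox, hydvd⟩ := hy
      rw [box, Fintype.mem_piFinset] at hybox
      rw [htgt, Finset.mem_filter]
      constructor
      · rw [box, Fintype.mem_piFinset]
        intro j
        by_cases hj : j = i
        · subst hj
          simp [Function.update_self, if_neg hit]
        · rw [Function.update_of_ne hj]
          have := hybox j
          by_cases hjt : j ∈ t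
          · rw [if_pos hjt]
            rwa [if_pos (Finset.mem_insert_of_mem hjt)] at this
          · rw [if_neg hjt]
            rwa [if_neg (by simp [hj, hjt])] at this
      · rw [hyupd y]
        rw [Finset.sum_insert hit] at hydvd
        have h1 : (g:ℤ) ∣ b i * y i + ∑ j ∈ t, b j * y j - c :=
          dvd_trans (by exact_mod_cast hgm) hydvd
        have h2 : (g:ℤ) ∣ b i * y i := hbig.mul_right _
        have h3 := dvd_sub h1 h2
        have h4 : b i * y i + (∑ j ∈ t, b j * y j) - c - b i * y i
            = (∑ j ∈ t, b j * y j) - c := by ring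
        rwa [h4] at h3
    have hcard : src.card = ∑ z ∈ tgt, (src.filter fun y => Function.update y i 0 = z).card :=
      Finset.card_eq_sum_card_fiberwise hmap
    have hfiber : ∀ z ∈ tgt, (src.filter fun y => Function.update y i 0 = z).card * k ≤ n + k := by
      intro z hz
      have hinj : (src.filter fun y => Function.update y i 0 = z).card
          ≤ ((Finset.Icc (1:ℤ) (n:ℤ)).filter
              (fun v => (m:ℤ) ∣ b i * v - (c - ∑ j ∈ t, b j * z j))).card := by
        refine Finset.card_le_card_of_injOn (fun y => y i) ?_ ?_
        · intro y hy
          rw [Finset.mem_coe, Finset.mem_filter] at hy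
          obtain ⟨hy1, hyz⟩ := hy
          rw [hsrc, Finset.mem_filter] at hy1
          obtain ⟨hybox, hydvd⟩ := hy1
          rw [box, Fintype.mem_piFinset] at hybox
          rw [Finset.mem_coe, Finset.mem_filter]
          constructor
          · have := hybox i
            rwa [if_pos (Finset.mem_insert_self i t)] at this
          · rw [Finset.sum_insert hit] at hydvd
            have hsum : ∑ j ∈ t, b j * y j = ∑ j ∈ t, b j * z j := by
              refine Finset.sum_congr rfl fun j hj => ?_
              have hz' : Function.update y i 0 j = z j := by rw [hyz]
              rw [← hz', Function.update_of_ne (fun h : j = i => hit (h ▸ hj))]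
            have h5 : b i * y i + (∑ j ∈ t, b j * y j) - c
                = b i * y i - (c - ∑ j ∈ t, b j * z j) := by rw [hsum]; ring
            rwa [h5] at hydvd
        · intro y₁ h₁ y₂ h₂ heq
          simp only [Finset.coe_filter, Set.mem_setOf_eq] at h₁ h₂
          funext j
          by_cases hj : j = i
          · subst hj; exact heq
          · have hcf := congrFun (h₁.2.trans h₂.2.symm) j
            rwa [Function.update_of_ne hj, Function.update_of_ne hj] at hcf
      calc (src.filter fun y => Function.update y i 0 = z).card * k
          ≤ ((Finset.Icc (1:ℤ) (n:ℤ)).filter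
              (fun v => (m:ℤ) ∣ b i * v - (c - ∑ j ∈ t, b j * z j))).card * k :=
            Nat.mul_le_mul_right k hinj
        _ ≤ n + k := one_var n m g k hn hm (b i) _ hgdef hkdef
    have hsk : src.card * k ≤ tgt.card * (n + k) := by
      rw [hcard, Finset.sum_mul]
      calc (∑ z ∈ tgt, (src.filter fun y => Function.update y i 0 = z).card * k)
          ≤ ∑ _z ∈ tgt, (n + k) := Finset.sum_le_sum hfiber
        _ = tgt.card * (n + k) := by rw [Finset.sum_const, smul_eq_mul]
    have hIH := IH g c hg0 hgcd'
    have hcardins : (insert i t).card = t.card + 1 := Finset.card_insert_of_notMem hit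
    have hgle : g ≤ m := Nat.le_of_dvd hm hgm
    have hkle : k ≤ m := Nat.div_le_self m g
    set N := n ^ t.card with hN
    have hN1 : 1 ≤ N := Nat.one_le_pow _ _ hn
    calc src.card * m * n = (src.card * k) * (g * n) := by rw [← hkg]; ring
      _ ≤ (tgt.card * (n + k)) * (g * n) := Nat.mul_le_mul_right _ hsk
      _ = (n + k) * (tgt.card * g * n) := by ring
      _ ≤ (n + k) * (3 ^ t.card * (n ^ (t.card + 1) + n ^ t.card * g)) := Nat.mul_le_mul_left _ hIH
      _ ≤ 3 ^ (insert i t).card * (n ^ ((insert i t).card + 1) + n ^ (insert i t).card * m) := by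
          rw [hcardins]
          have h1 : n ^ (t.card + 1) = N * n := pow_succ n t.card
          have h2 : n ^ (t.card + 1 + 1) = N * n * n := by rw [pow_succ, pow_succ]
          have h3 : (3:ℕ) ^ (t.card + 1) = 3 ^ t.card * 3 := pow_succ 3 t.card
          rw [h1, h2, h3]
          have e1 : N * n * g ≤ N * n * m := by gcongr
          have e2 : k * (N * n) ≤ m * (N * n) := by gcongr
          have e3 : m * N ≤ N * n * m := by
            calc m * N = (N * m) * 1 := by ring
              _ ≤ (N * m) * n := by gcongr; exact hn
              _ = N * n * m := by ring
          have e4 : k * (N * g) = N * m := by rw [← hkg]; ring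
          have key2 : (n + k) * (N * n + N * g) ≤ 3 * (N * n * n + N * n * m) := by
            nlinarith [e1, e2, e3, e4]
          calc (n + k) * (3 ^ t.card * (N * n + N * g))
              = 3 ^ t.card * ((n + k) * (N * n + N * g)) := by ring
            _ ≤ 3 ^ t.card * (3 * (N * n * n + N * n * m)) := Nat.mul_le_mul_left _ key2
            _ = 3 ^ t.card * 3 * (N * n * n + N * n * m) := by ring


theorem stmt4 (d : ℕ) (hd : 2 ≤ d) (a : Fin d → ℤ) (ha : a ≠ 0)
    (hgcd : Finset.univ.gcd a = 1)
    (s : ℕ) (hs : s = Finset.univ.sup fun i => (a i).natAbs)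
    (n : ℕ) (hn : 0 < n) (hns : s ≤ n)
    (L : Set (Fin d → ℤ)) (hL : L = {x | ∑ i, a i * x i = 0})
    (hspan : Module.finrank ℝ (Submodule.span ℝ
      ((fun x : Fin d → ℤ => (fun i => (x i : ℝ) : Fin d → ℝ)) ''
        (L ∩ {x | ∀ i, 1 ≤ x i ∧ x i ≤ (n : ℤ)}))) = d - 1) :
    ((L ∩ {x | ∀ i, 1 ≤ x i ∧ x i ≤ (n : ℤ)}).ncard : ℝ) ≤
      3 ^ d * (n : ℝ) ^ (d - 1) / (s : ℝ) := by
  haveI : NeZero d := ⟨(Nat.lt_of_lt_of_le Nat.zero_lt_two hd).ne'⟩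
  have hd1 : 1 ≤ d := le_trans one_le_two hd
  obtain ⟨i₀, -, hi₀⟩ := Finset.exists_mem_eq_sup (Finset.univ : Finset (Fin d))
    Finset.univ_nonempty (fun i => (a i).natAbs)
  have hsi : (a i₀).natAbs = s := by rw [hs, hi₀]
  have hs0 : 0 < s := by
    obtain ⟨j, hj⟩ := Function.ne_iff.mp ha
    have h1 : 0 < (a j).natAbs := Int.natAbs_pos.mpr hj
    have h2 := Finset.le_sup (f := fun i => (a i).natAbs) (Finset.mem_univ j)
    rw [hs]; exact lt_of_lt_of_le h1 h2
  have hai₀ : a i₀ ≠ 0 := by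
    intro h; rw [h] at hsi
    have h0 : s = 0 := by simpa using hsi.symm
    exact absurd h0 hs0.ne'
  set S := L ∩ {x : Fin d → ℤ | ∀ i, 1 ≤ x i ∧ x i ≤ (n : ℤ)} with hS
  set t₀ : Finset (Fin d) := ({i₀}ᶜ : Finset (Fin d)) with ht₀
  have hi₀t₀ : i₀ ∉ t₀ := by simp [ht₀]
  have hins : insert i₀ t₀ = Finset.univ := Finset.insert_compl_self i₀
  have ht₀card : t₀.card = d - 1 := by
    rw [ht₀, Finset.card_compl, Finset.card_singleton, Fintype.card_fin]
  have hfin : S.Finite := by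
    apply Set.Finite.subset (Finset.finite_toSet (box Finset.univ n))
    intro x hx
    rw [Finset.mem_coe, box, Fintype.mem_piFinset]
    intro j
    rw [if_pos (Finset.mem_univ j), Finset.mem_Icc]
    exact hx.2 j
  set tgt := (box t₀ n).filter (fun z => ((s:ℕ):ℤ) ∣ (∑ j ∈ t₀, a j * z j) - 0) with htgt
  -- sums
  have hsum : ∀ x ∈ S, ∑ j ∈ t₀, a j * x j = -(a i₀ * x i₀) := by
    intro x hx
    have h0 : ∑ i, a i * x i = 0 := by
      have := hx.1; rw [hL] at this; exact this
    rw [← hins, Finset.sum_insert hi₀t₀] at h0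
    linarith
  have hupdsum : ∀ x : Fin d → ℤ, ∑ j ∈ t₀, a j * Function.update x i₀ 0 j
      = ∑ j ∈ t₀, a j * x j := by
    intro x
    refine Finset.sum_congr rfl fun j hj => ?_
    rw [Function.update_of_ne (fun h : j = i₀ => hi₀t₀ (h ▸ hj))]
  have hcount : hfin.toFinset.card ≤ tgt.card := by
    refine Finset.card_le_card_of_injOn (fun x => Function.update x i₀ 0) ?_ ?_
    · intro x hx
      show Function.update x i₀ 0 ∈ tgt
      rw [Finset.mem_coe, Set.Finite.mem_toFinset] at hx
      rw [htgt, Finset.mem_filter]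
      constructor
      · rw [box, Fintype.mem_piFinset]
        intro j
        by_cases hj : j = i₀
        · subst hj; simp [Function.update_self, if_neg hi₀t₀]
        · rw [Function.update_of_ne hj, if_pos (by simp [ht₀, hj]), Finset.mem_Icc]
          exact hx.2 j
      · rw [hupdsum x, hsum x hx, sub_zero, ← hsi]
        rw [Int.natAbs_dvd]
        exact (dvd_mul_right _ _).neg_right
    · intro x hx y hy heq
      rw [Set.Finite.coe_toFinset] at hx hy
      simp only at heq
      have hxy : ∀ j, j ≠ i₀ → x j = y j := by
        intro j hj
        have := congrFun heq j
        rwa [Function.update_of_ne hj, Function.update_of_ne hj] at this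
      have hsx := hsum x hx
      have hsy := hsum y hy
      have hse : ∑ j ∈ t₀, a j * x j = ∑ j ∈ t₀, a j * y j := by
        refine Finset.sum_congr rfl fun j hj => ?_
        rw [hxy j (fun h => hi₀t₀ (h ▸ hj))]
      have : a i₀ * x i₀ = a i₀ * y i₀ := by
        rw [hsx, hsy] at hse; linarith
      have hxi := mul_left_cancel₀ hai₀ this
      funext j
      by_cases hj : j = i₀
      · subst hj; exact hxi
      · exact hxy j hj
  -- gcd condition
  have hgc : Int.gcd (t₀.gcd a) ((s:ℕ):ℤ) = 1 := by
    have h1 : gcd (a i₀) (t₀.gcd a) = 1 := by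
      rw [← Finset.gcd_insert, hins, hgcd]
    have h2 : Int.gcd (a i₀) (t₀.gcd a) = 1 := by
      have h3 := Int.coe_gcd (a i₀) (t₀.gcd a)
      rw [h1] at h3; exact_mod_cast h3
    rw [Int.gcd_def] at h2 ⊢
    rw [Int.natAbs_natCast, ← hsi, Nat.gcd_comm]
    exact h2
  have hkey := key n hn a t₀ s 0 hs0 hgc
  rw [ht₀card] at hkey
  -- combine counts
  have hnc : S.ncard = hfin.toFinset.card := Set.ncard_eq_toFinset_card S hfin
  have hmain : S.ncard * s ≤ 3 ^ d * n ^ (d - 1) := by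
    have h4 : S.ncard * s * n ≤ tgt.card * s * n := by
      rw [hnc]; exact Nat.mul_le_mul_right n (Nat.mul_le_mul_right s hcount)
    have h5 : tgt.card * s * n ≤ 3 ^ (d-1) * (n ^ (d - 1 + 1) + n ^ (d-1) * s) := hkey
    have h6 : n ^ (d - 1 + 1) = n ^ (d-1) * n := pow_succ n (d-1)
    have h7 : n ^ (d-1) * s ≤ n ^ (d-1) * n := Nat.mul_le_mul_left _ hns
    have h8 : (3:ℕ) ^ d = 3 ^ (d-1) * 3 := by
      rw [← pow_succ]; congr 1; exact (Nat.sub_add_cancel hd1).symm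
    have h9 : S.ncard * s * n ≤ (3 ^ d * n ^ (d-1)) * n := by
      calc S.ncard * s * n ≤ 3 ^ (d-1) * (n ^ (d - 1 + 1) + n ^ (d-1) * s) :=
            le_trans h4 h5
        _ ≤ 3 ^ (d-1) * (n ^ (d-1) * n + n ^ (d-1) * n) := by
            rw [h6]; exact Nat.mul_le_mul_left _ (Nat.add_le_add_left h7 _)
        _ = 3 ^ (d-1) * 2 * (n ^ (d-1) * n) := by ring
        _ ≤ 3 ^ (d-1) * 3 * (n ^ (d-1) * n) := by
            exact Nat.mul_le_mul_right _ (Nat.mul_le_mul_left _ (by norm_num))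
        _ = (3 ^ d * n ^ (d-1)) * n := by rw [h8]; ring
    exact Nat.le_of_mul_le_mul_right h9 hn
  -- to real
  have hsR : (0:ℝ) < (s:ℝ) := by exact_mod_cast hs0
  rw [le_div_iff₀ hsR]
  calc (S.ncard : ℝ) * s = ((S.ncard * s : ℕ) : ℝ) := by push_cast; ring
    _ ≤ ((3 ^ d * n ^ (d-1) : ℕ) : ℝ) := by exact_mod_cast hmain
    _ = 3 ^ d * (n:ℝ) ^ (d-1) := by push_cast; ring
end
end

section
/- Let d₀ ≥ 2 and t ≥ 1 be integers and c > 0 a real number. Then there exists a constant c₁ = c₁(c, d₀, t) with the following property. Let P and Q be finite sets with |P| = m and |Q| = n, and let E ⊆ P × Q. For q ∈ Q write N(q) = {p ∈ P : (p, q) ∈ E}. Suppose that for every positive integer z and every subset P′ ⊆ P with |P′| = z one has |{N(q) ∩ P′ : q ∈ Q}| ≤ c·z^{d₀}, and suppose there are no subsets P″ ⊆ P and Q″ ⊆ Q with |P″| = |Q″| = t and P″ × Q″ ⊆ E. Then |E| ≤ c₁ (m·n^{1−1/d₀} + n). -/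
noncomputable section

open Finset


lemma card_powersetCard_supset {α : Type*} [DecidableEq α] (P T : Finset α) (hT : T ⊆ P)
    (z : ℕ) (hz : T.card ≤ z) :
    ((P.powersetCard z).filter (fun P' => T ⊆ P')).card
      = (P.card - T.card).choose (z - T.card) := by
  have hPT : (P \ T).card = P.card - T.card := Finset.card_sdiff_of_subset hT
  rw [← hPT, ← Finset.card_powersetCard (z - T.card) (P \ T)]
  apply Finset.card_bij' (fun P' _ => P' \ T) (fun R _ => R ∪ T)
  · intro P' hP'
    simp only [mem_filter, Finset.mem_powersetCard] at hP' ⊢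
    exact ⟨sdiff_subset_sdiff hP'.1.1 le_rfl,
      by rw [Finset.card_sdiff_of_subset hP'.2, hP'.1.2]⟩
  · intro R hR
    rw [Finset.mem_powersetCard] at hR
    simp only [mem_filter, Finset.mem_powersetCard]
    have hdisj : Disjoint R T := Finset.disjoint_of_subset_left hR.1 sdiff_disjoint
    refine ⟨⟨Finset.union_subset (hR.1.trans sdiff_subset) hT, ?_⟩, Finset.subset_union_right⟩
    rw [Finset.card_union_of_disjoint hdisj, hR.2]
    omega
  · intro P' hP'
    simp only [mem_filter] at hP'
    exact Finset.sdiff_union_of_subset hP'.2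
  · intro R hR
    rw [Finset.mem_powersetCard] at hR
    have hdisj : Disjoint R T := Finset.disjoint_of_subset_left hR.1 sdiff_disjoint
    exact Finset.union_sdiff_cancel_right hdisj

lemma card_powersetCard_mem {α : Type*} [DecidableEq α] {P : Finset α} {x : α} (hx : x ∈ P)
    (z : ℕ) (hz : 1 ≤ z) :
    ((P.powersetCard z).filter (fun P' => x ∈ P')).card
      = (P.card - 1).choose (z - 1) := by
  have := card_powersetCard_supset P {x} (by simpa using hx) z (by simpa using hz)
  simpa using this

lemma card_powersetCard_mem_pair {α : Type*} [DecidableEq α] {P : Finset α} {x y : α}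
    (hx : x ∈ P) (hy : y ∈ P) (hxy : x ≠ y) (z : ℕ) (hz : 2 ≤ z) :
    ((P.powersetCard z).filter (fun P' => x ∈ P' ∧ y ∈ P')).card
      = (P.card - 2).choose (z - 2) := by
  have h := card_powersetCard_supset P {x, y} (by simp [Finset.insert_subset_iff, hx, hy]) z
    (by rw [Finset.card_pair hxy]; exact hz)
  rw [Finset.card_pair hxy] at h
  rw [← h]
  congr 1
  apply Finset.filter_congr
  intro P' _
  simp [Finset.insert_subset_iff]

lemma sum_inter_card {α : Type*} [DecidableEq α] {P S : Finset α} (hS : S ⊆ P)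
    (z : ℕ) (hz : 1 ≤ z) :
    ∑ P' ∈ P.powersetCard z, (S ∩ P').card
      = S.card * (P.card - 1).choose (z - 1) := by
  have key : ∀ P' : Finset α, (S ∩ P').card = ∑ x ∈ S, if x ∈ P' then 1 else 0 := by
    intro P'
    rw [← Finset.card_filter, Finset.filter_mem_eq_inter]
  calc ∑ P' ∈ P.powersetCard z, (S ∩ P').card
      = ∑ P' ∈ P.powersetCard z, ∑ x ∈ S, if x ∈ P' then 1 else 0 := by
        exact Finset.sum_congr rfl fun P' _ => key P'
    _ = ∑ x ∈ S, ∑ P' ∈ P.powersetCard z, if x ∈ P' then 1 else 0 := Finset.sum_comm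
    _ = ∑ x ∈ S, ((P.powersetCard z).filter (fun P' => x ∈ P')).card := by
        exact Finset.sum_congr rfl fun x _ => (Finset.card_filter _ _).symm
    _ = ∑ x ∈ S, (P.card - 1).choose (z - 1) := by
        exact Finset.sum_congr rfl fun x hx => card_powersetCard_mem (hS hx) z hz
    _ = S.card * (P.card - 1).choose (z - 1) := by
        rw [Finset.sum_const, smul_eq_mul]

lemma sum_inter_card_sq {α : Type*} [DecidableEq α] {P S : Finset α} (hS : S ⊆ P)
    (z : ℕ) (hz : 2 ≤ z) :
    ∑ P' ∈ P.powersetCard z, (S ∩ P').card ^ 2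
      = S.card * (P.card - 1).choose (z - 1)
        + S.card * (S.card - 1) * ((P.card - 2).choose (z - 2)) := by
  have key : ∀ P' : Finset α, (S ∩ P').card ^ 2
      = ∑ x ∈ S, ∑ y ∈ S, if x ∈ P' ∧ y ∈ P' then 1 else 0 := by
    intro P'
    have h1 : (S ∩ P').card = ∑ x ∈ S, if x ∈ P' then 1 else 0 := by
      rw [← Finset.card_filter, Finset.filter_mem_eq_inter]
    rw [sq, h1, Finset.sum_mul_sum]
    apply Finset.sum_congr rfl; intro x _
    apply Finset.sum_congr rfl; intro y _
    by_cases hx : x ∈ P' <;> by_cases hy : y ∈ P' <;> simp [hx, hy]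
  calc ∑ P' ∈ P.powersetCard z, (S ∩ P').card ^ 2
      = ∑ P' ∈ P.powersetCard z, ∑ x ∈ S, ∑ y ∈ S, if x ∈ P' ∧ y ∈ P' then 1 else 0 :=
        Finset.sum_congr rfl fun P' _ => key P'
    _ = ∑ x ∈ S, ∑ y ∈ S, ∑ P' ∈ P.powersetCard z, if x ∈ P' ∧ y ∈ P' then 1 else 0 := by
        rw [Finset.sum_comm]
        exact Finset.sum_congr rfl fun x _ => Finset.sum_comm
    _ = ∑ x ∈ S, ∑ y ∈ S, ((P.powersetCard z).filter (fun P' => x ∈ P' ∧ y ∈ P')).card := by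
        exact Finset.sum_congr rfl fun x _ => Finset.sum_congr rfl fun y _ =>
          (Finset.card_filter _ _).symm
    _ = ∑ x ∈ S, ((S.card - 1) * (P.card - 2).choose (z - 2) + (P.card - 1).choose (z - 1)) := by
        apply Finset.sum_congr rfl; intro x hx
        rw [← Finset.sum_erase_add _ _ hx]
        congr 1
        · rw [← Finset.card_erase_of_mem hx, ← smul_eq_mul, ← Finset.sum_const]
          apply Finset.sum_congr rfl; intro y hy
          rw [Finset.mem_erase] at hy
          exact card_powersetCard_mem_pair (hS hx) (hS hy.2) (Ne.symm hy.1) z hz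
        · have : ((P.powersetCard z).filter (fun P' => x ∈ P' ∧ x ∈ P')).card
              = ((P.powersetCard z).filter (fun P' => x ∈ P')).card := by
            congr 1; apply Finset.filter_congr; intro P' _; simp
          rw [this, card_powersetCard_mem (hS hx) z (by omega)]
    _ = S.card * (P.card - 1).choose (z - 1)
        + S.card * (S.card - 1) * ((P.card - 2).choose (z - 2)) := by
        rw [Finset.sum_add_distrib, Finset.sum_const, Finset.sum_const, smul_eq_mul,
          smul_eq_mul]
        ring

set_option maxHeartbeats 2000000 in
lemma cheb {α : Type*} [DecidableEq α] {P S : Finset α} (hS : S ⊆ P) (t z : ℕ)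
    (hz : 2 ≤ z) (hzm : z ≤ P.card)
    (hμ : (2 * t + 8) * P.card ≤ z * S.card) :
    (P.card.choose z : ℝ)
      ≤ 2 * (((P.powersetCard z).filter (fun P' => t ≤ (S ∩ P').card)).card : ℝ) := by
  classical
  set m := P.card with hm
  set s := S.card with hs
  have hm2 : 2 ≤ m := le_trans hz hzm
  have hs1 : 1 ≤ s := by nlinarith [hμ]
  have hsm : s ≤ m := Finset.card_le_card hS
  set M : ℝ := (m : ℝ) with hM
  set Z : ℝ := (z : ℝ) with hZ
  set Sc : ℝ := (s : ℝ) with hSc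
  set N₀ : ℝ := (m.choose z : ℝ) with hN₀
  set C1 : ℝ := ((m - 1).choose (z - 1) : ℝ) with hC1
  set C2 : ℝ := ((m - 2).choose (z - 2) : ℝ) with hC2
  have hM2 : (2 : ℝ) ≤ M := by rw [hM]; exact_mod_cast hm2
  have hZ2 : (2 : ℝ) ≤ Z := by rw [hZ]; exact_mod_cast hz
  have hZM : Z ≤ M := by rw [hZ, hM]; exact_mod_cast hzm
  have hSc1 : (1 : ℝ) ≤ Sc := by rw [hSc]; exact_mod_cast hs1
  have hScM : Sc ≤ M := by rw [hSc, hM]; exact_mod_cast hsm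
  have hN₀0 : (0 : ℝ) ≤ N₀ := by rw [hN₀]; positivity
  have hC10 : (0 : ℝ) ≤ C1 := by rw [hC1]; positivity
  have hC20 : (0 : ℝ) ≤ C2 := by rw [hC2]; positivity
  clear_value M Z Sc N₀ C1 C2
  have hZSc : (2 * (t : ℝ) + 8) * M ≤ Z * Sc := by
    have := (Nat.cast_le (α := ℝ)).2 hμ
    push_cast at this
    rw [hM, hZ, hSc]; convert this using 1 <;> push_cast <;> ring
  have f3 : M * C1 = Z * N₀ := by
    have h := Nat.add_one_mul_choose_eq (m - 1) (z - 1)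
    have hm1 : m - 1 + 1 = m := by omega
    have hz1 : z - 1 + 1 = z := by omega
    rw [hm1, hz1] at h
    rw [hM, hC1, hZ, hN₀]
    exact_mod_cast h.trans (mul_comm _ _)
  have f4 : (M - 1) * C2 = (Z - 1) * C1 := by
    have h := Nat.add_one_mul_choose_eq (m - 2) (z - 2)
    have hm1 : m - 2 + 1 = m - 1 := by omega
    have hz1 : z - 2 + 1 = z - 1 := by omega
    rw [hm1, hz1] at h
    have hq : ((m - 1 : ℕ) : ℝ) = M - 1 := by
      rw [hM, Nat.cast_sub (by omega : 1 ≤ m)]; norm_num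
    have hq2 : ((z - 1 : ℕ) : ℝ) = Z - 1 := by
      rw [hZ, Nat.cast_sub (by omega : 1 ≤ z)]; norm_num
    have hcast := congrArg (fun x : ℕ => (x : ℝ)) h
    push_cast at hcast
    rw [hq, hq2] at hcast
    rw [hC2, hC1]
    linear_combination hcast
  set PS := P.powersetCard z with hPS
  clear_value PS
  have hcardPS : (PS.card : ℝ) = N₀ := by
    rw [hPS, Finset.card_powersetCard, hN₀]
  have f1 : (∑ P' ∈ PS, ((S ∩ P').card : ℝ)) = Sc * C1 := by
    have h := sum_inter_card hS z (by omega)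
    rw [hPS, hSc, hC1]
    exact_mod_cast congrArg (fun x : ℕ => (x : ℝ)) h
  have f2 : (∑ P' ∈ PS, ((S ∩ P').card : ℝ) ^ 2) = Sc * C1 + Sc * (Sc - 1) * C2 := by
    have h := sum_inter_card_sq hS z hz
    have h3 : ((s - 1 : ℕ) : ℝ) = (s : ℝ) - 1 := by
      rw [Nat.cast_sub hs1, Nat.cast_one]
    rw [hPS, hSc, hC1, hC2, ← h3]
    exact_mod_cast h
  have hD : (∑ P' ∈ PS, (M * ((S ∩ P').card : ℝ) - Z * Sc) ^ 2)
      = M ^ 2 * (Sc * C1 + Sc * (Sc - 1) * C2) - 2 * Z * Sc * M * (Sc * C1)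
        + (Z * Sc) ^ 2 * N₀ := by
    have expand : ∀ P' : Finset α, (M * ((S ∩ P').card : ℝ) - Z * Sc) ^ 2
        = M ^ 2 * ((S ∩ P').card : ℝ) ^ 2 - 2 * Z * Sc * M * ((S ∩ P').card : ℝ)
          + (Z * Sc) ^ 2 := fun P' => by ring
    rw [Finset.sum_congr rfl fun P' _ => expand P']
    rw [Finset.sum_add_distrib, Finset.sum_sub_distrib, ← Finset.mul_sum, ← Finset.mul_sum,
      Finset.sum_const, nsmul_eq_mul, hcardPS, f1, f2]
    ring
  have key : M ^ 2 * Sc * (Sc - 1) * C2 ≤ Z ^ 2 * Sc ^ 2 * N₀ := by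
    have h5 : M * (Sc - 1) * (Z - 1) ≤ (M - 1) * (Z * Sc) := by nlinarith
    have h6 : (M - 1) * (M ^ 2 * Sc * (Sc - 1) * C2)
        = (M * (Sc - 1) * (Z - 1)) * (Z * N₀) * Sc := by
      have hq : M ^ 2 * Sc * (Sc - 1) * ((M - 1) * C2)
          = M * Sc * (Sc - 1) * (Z - 1) * (M * C1) := by rw [f4]; ring
      rw [f3] at hq
      linear_combination hq
    have h7 : (M * (Sc - 1) * (Z - 1)) * (Z * N₀ * Sc)
        ≤ ((M - 1) * (Z * Sc)) * (Z * N₀ * Sc) :=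
      mul_le_mul_of_nonneg_right h5 (by positivity)
    have h8 : (M - 1) * (M ^ 2 * Sc * (Sc - 1) * C2) ≤ (M - 1) * (Z ^ 2 * Sc ^ 2 * N₀) := by
      rw [h6]
      calc (M * (Sc - 1) * (Z - 1)) * (Z * N₀) * Sc
          = (M * (Sc - 1) * (Z - 1)) * (Z * N₀ * Sc) := by ring
        _ ≤ ((M - 1) * (Z * Sc)) * (Z * N₀ * Sc) := h7
        _ = (M - 1) * (Z ^ 2 * Sc ^ 2 * N₀) := by ring
    have hM1 : (0 : ℝ) < M - 1 := by linarith
    exact le_of_mul_le_mul_left h8 hM1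
  have hDle : (∑ P' ∈ PS, (M * ((S ∩ P').card : ℝ) - Z * Sc) ^ 2) ≤ Z * Sc * M * N₀ := by
    rw [hD]
    have expand2 : M ^ 2 * (Sc * C1 + Sc * (Sc - 1) * C2) - 2 * Z * Sc * M * (Sc * C1)
        + (Z * Sc) ^ 2 * N₀
        = (M * C1) * (M * Sc) - (M * C1) * (2 * Z * Sc * Sc) + M ^ 2 * Sc * (Sc - 1) * C2
          + (Z * Sc) ^ 2 * N₀ := by ring
    rw [expand2, f3]
    nlinarith [key]
  set B := PS.filter (fun P' => ¬ t ≤ (S ∩ P').card) with hB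
  have hBbound : (B.card : ℝ) * (Z * Sc / 2) ^ 2
      ≤ ∑ P' ∈ PS, (M * ((S ∩ P').card : ℝ) - Z * Sc) ^ 2 := by
    have hsub : B ⊆ PS := Finset.filter_subset _ _
    have hper : ∀ P' ∈ B, (Z * Sc / 2) ^ 2 ≤ (M * ((S ∩ P').card : ℝ) - Z * Sc) ^ 2 := by
      intro P' hP'
      rw [hB, Finset.mem_filter] at hP'
      have hlt : (S ∩ P').card < t := by omega
      have hXle : ((S ∩ P').card : ℝ) ≤ (t : ℝ) - 1 := by
        have h0 : ((S ∩ P').card : ℕ) + 1 ≤ t := hlt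
        have h1 := (Nat.cast_le (α := ℝ)).2 h0
        push_cast at h1; linarith
      have hMt : M * ((S ∩ P').card : ℝ) ≤ M * ((t : ℝ) - 1) :=
        mul_le_mul_of_nonneg_left hXle (by linarith)
      have hMX : M * ((S ∩ P').card : ℝ) - Z * Sc ≤ -(Z * Sc / 2) := by nlinarith
      have hZSc0 : (0 : ℝ) ≤ Z * Sc := by nlinarith
      have hq := sq_le_sq' (a := Z * Sc / 2)
        (b := -(M * ((S ∩ P').card : ℝ) - Z * Sc)) (by linarith) (by linarith)
      calc (Z * Sc / 2) ^ 2 ≤ (-(M * ((S ∩ P').card : ℝ) - Z * Sc)) ^ 2 := hq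
        _ = (M * ((S ∩ P').card : ℝ) - Z * Sc) ^ 2 := by ring
    calc (B.card : ℝ) * (Z * Sc / 2) ^ 2 = ∑ _P' ∈ B, (Z * Sc / 2) ^ 2 := by
          rw [Finset.sum_const, nsmul_eq_mul]
      _ ≤ ∑ P' ∈ B, (M * ((S ∩ P').card : ℝ) - Z * Sc) ^ 2 := Finset.sum_le_sum hper
      _ ≤ ∑ P' ∈ PS, (M * ((S ∩ P').card : ℝ) - Z * Sc) ^ 2 :=
          Finset.sum_le_sum_of_subset_of_nonneg hsub (fun _ _ _ => by positivity)
  have hZScpos : (0 : ℝ) < Z * Sc := by nlinarith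
  have h9 : (B.card : ℝ) * (Z * Sc) ≤ 4 * M * N₀ := by
    have h9' : (B.card : ℝ) * (Z * Sc) * (Z * Sc) ≤ 4 * M * N₀ * (Z * Sc) := by
      nlinarith [hBbound.trans hDle]
    exact le_of_mul_le_mul_right h9' hZScpos
  have hBle : (B.card : ℝ) ≤ N₀ / 2 := by
    have hB0 : (0 : ℝ) ≤ (B.card : ℝ) := Nat.cast_nonneg _
    have h10 : (B.card : ℝ) * (8 * M) ≤ (B.card : ℝ) * (Z * Sc) := by
      apply mul_le_mul_of_nonneg_left _ hB0
      nlinarith [Nat.cast_nonneg (α := ℝ) t]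
    nlinarith [h10.trans h9]
  have hsplit : ((PS.filter (fun P' => t ≤ (S ∩ P').card)).card : ℝ) + (B.card : ℝ) = N₀ := by
    rw [← hcardPS, hB]
    exact_mod_cast Finset.card_filter_add_card_filter_not (s := PS)
      (p := fun P' => t ≤ (S ∩ P').card)
  linarith [hsplit, hBle]

section main
variable {α β : Type} [DecidableEq α] [DecidableEq β]
  (d₀ t : ℕ) (c : ℝ)
  (P : Finset α) (Q : Finset β) (E : Finset (α × β))

-- the trace bound for a fixed P'
lemma trace_bound (ht : 1 ≤ t)
    (hShatter : ∀ z : ℕ, 0 < z → ∀ P' ⊆ P, P'.card = z →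
        (({T | ∃ q ∈ Q, T = (P.filter fun p => (p, q) ∈ E) ∩ P'} :
          Set (Finset α)).ncard : ℝ) ≤ c * (z : ℝ) ^ d₀)
    (hKtt : ¬ ∃ (P'' : Finset α) (Q'' : Finset β), P'' ⊆ P ∧ Q'' ⊆ Q ∧
        P''.card = t ∧ Q''.card = t ∧ ∀ p ∈ P'', ∀ q ∈ Q'', (p, q) ∈ E)
    (z : ℕ) (hz : 0 < z) (P' : Finset α) (hP' : P' ⊆ P) (hPz : P'.card = z)
    (Q₀ : Finset β) (hQ₀ : Q₀ ⊆ Q) :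
    ((Q₀.filter fun q => t ≤ ((P.filter fun p => (p, q) ∈ E) ∩ P').card).card : ℝ)
      ≤ ((t : ℝ) - 1) * (c * (z : ℝ) ^ d₀) := by
  classical
  set f : β → Finset α := fun q => (P.filter fun p => (p, q) ∈ E) ∩ P' with hf
  set Qf := Q₀.filter (fun q => t ≤ (f q).card) with hQf
  have hfiber : ∀ T ∈ Qf.image f, (Qf.filter (fun q => f q = T)).card ≤ t - 1 := by
    intro T hT
    by_contra hcon
    push_neg at hcon
    have hcard : t ≤ (Qf.filter (fun q => f q = T)).card := by omega
    obtain ⟨Q'', hQ''sub, hQ''card⟩ := Finset.exists_subset_card_eq hcard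
    rw [Finset.mem_image] at hT
    obtain ⟨q₀, hq₀, hq₀T⟩ := hT
    have hq₀' : t ≤ (f q₀).card := (Finset.mem_filter.1 hq₀).2
    rw [hq₀T] at hq₀'
    obtain ⟨P'', hP''sub, hP''card⟩ := Finset.exists_subset_card_eq hq₀'
    apply hKtt
    refine ⟨P'', Q'', ?_, ?_, hP''card, hQ''card, ?_⟩
    · intro p hp
      have : p ∈ T := hP''sub hp
      rw [← hq₀T, hf] at this
      exact Finset.mem_of_mem_filter p (Finset.mem_inter.1 this).1
    · exact hQ''sub.trans ((Finset.filter_subset _ _).trans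
        ((Finset.filter_subset _ _).trans hQ₀))
    · intro p hp q hq
      have hqT : f q = T := (Finset.mem_filter.1 (hQ''sub hq)).2
      have hpT : p ∈ T := hP''sub hp
      rw [← hqT, hf] at hpT
      have := (Finset.mem_inter.1 hpT).1
      exact (Finset.mem_filter.1 this).2
  have hsum : Qf.card = ∑ T ∈ Qf.image f, (Qf.filter (fun q => f q = T)).card :=
    Finset.card_eq_sum_card_image f Qf
  have hQfcard : Qf.card ≤ (t - 1) * (Qf.image f).card := by
    rw [hsum]
    calc ∑ T ∈ Qf.image f, (Qf.filter (fun q => f q = T)).card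
        ≤ ∑ T ∈ Qf.image f, (t - 1) := Finset.sum_le_sum hfiber
      _ = (Qf.image f).card * (t - 1) := by rw [Finset.sum_const, smul_eq_mul]
      _ = (t - 1) * (Qf.image f).card := mul_comm _ _
  have himage : ((Qf.image f).card : ℝ) ≤ c * (z : ℝ) ^ d₀ := by
    have hset : ({T | ∃ q ∈ Q, T = f q} : Set (Finset α)) = ↑(Q.image f) := by
      ext T
      simp only [Set.mem_setOf_eq, Finset.coe_image, Set.mem_image, Finset.mem_coe]
      constructor
      · rintro ⟨q, hq, rfl⟩; exact ⟨q, hq, rfl⟩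
      · rintro ⟨q, hq, rfl⟩; exact ⟨q, hq, rfl⟩
    have h1 := hShatter z hz P' hP' hPz
    rw [hf] at hset ⊢
    rw [hset, Set.ncard_coe_finset] at h1
    have hsub : Qf.image f ⊆ Q.image f :=
      Finset.image_subset_image ((Finset.filter_subset _ _).trans hQ₀)
    calc ((Qf.image f).card : ℝ) ≤ ((Q.image f).card : ℝ) := by
          exact_mod_cast Finset.card_le_card hsub
      _ ≤ c * (z : ℝ) ^ d₀ := h1
  have ht1 : ((t - 1 : ℕ) : ℝ) = (t : ℝ) - 1 := by
    rw [Nat.cast_sub ht, Nat.cast_one]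
  calc ((Qf.card : ℕ) : ℝ) ≤ (((t - 1) * (Qf.image f).card : ℕ) : ℝ) := by
        exact_mod_cast hQfcard
    _ = ((t : ℝ) - 1) * ((Qf.image f).card : ℝ) := by push_cast [ht1]; ring
    _ ≤ ((t : ℝ) - 1) * (c * (z : ℝ) ^ d₀) := by
        apply mul_le_mul_of_nonneg_left himage
        have : (1 : ℝ) ≤ (t : ℝ) := by exact_mod_cast ht
        linarith
end main

set_option maxHeartbeats 1000000 in
lemma claimA {α β : Type} [DecidableEq α] [DecidableEq β]
    (d₀ t : ℕ) (c : ℝ) (P : Finset α) (Q : Finset β) (E : Finset (α × β))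
    (hc : 0 < c) (ht : 1 ≤ t)
    (hShatter : ∀ z : ℕ, 0 < z → ∀ P' ⊆ P, P'.card = z →
        (({T | ∃ q ∈ Q, T = (P.filter fun p => (p, q) ∈ E) ∩ P'} :
          Set (Finset α)).ncard : ℝ) ≤ c * (z : ℝ) ^ d₀)
    (hKtt : ¬ ∃ (P'' : Finset α) (Q'' : Finset β), P'' ⊆ P ∧ Q'' ⊆ Q ∧
        P''.card = t ∧ Q''.card = t ∧ ∀ p ∈ P'', ∀ q ∈ Q'', (p, q) ∈ E)
    (k : ℕ) (hk : 2 * t + 8 ≤ k) :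
    ((Q.filter fun q => k ≤ ((P.filter fun p => (p, q) ∈ E).card)).card : ℝ)
      ≤ (2 * (t : ℝ) * c * (2 * (t : ℝ) + 9) ^ d₀) * ((P.card : ℝ) / (k : ℝ)) ^ d₀ := by
  classical
  set N : β → Finset α := fun q => P.filter fun p => (p, q) ∈ E with hN
  set Qk := Q.filter (fun q => k ≤ (N q).card) with hQk
  by_cases hQke : Qk = ∅
  · rw [hQke]
    simp only [Finset.card_empty, Nat.cast_zero]
    positivity
  -- Qk nonempty: some q has deg ≥ k hence k ≤ m
  have hkm : k ≤ P.card := by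
    obtain ⟨q, hq⟩ := Finset.nonempty_of_ne_empty hQke
    rw [hQk, Finset.mem_filter] at hq
    exact le_trans hq.2 (Finset.card_le_card (Finset.filter_subset _ _))
  set m := P.card with hm
  have hk10 : 10 ≤ k := by omega
  have hkpos : 0 < k := by omega
  set A := (2 * t + 8) * m with hA
  have hmk : m ≤ A := by
    calc m = 1 * m := (one_mul m).symm
      _ ≤ (2 * t + 8) * m := Nat.mul_le_mul_right m (by omega)
  have hkA : k ≤ A := le_trans hkm hmk
  set z := min (A / k + 1) m with hzdef
  have hz_low : A ≤ z * k := by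
    rcases min_choice (A / k + 1) m with hmin | hmin
    · rw [hzdef, hmin]
      have h1 : k * (A / k) + A % k = A := Nat.div_add_mod A k
      have h2 : A % k < k := Nat.mod_lt _ hkpos
      calc A = k * (A / k) + A % k := h1.symm
        _ ≤ k * (A / k) + k := Nat.add_le_add_left h2.le _
        _ = (A / k + 1) * k := by ring
    · rw [hzdef, hmin, hA]
      calc (2 * t + 8) * m ≤ k * m := Nat.mul_le_mul_right m hk
        _ = m * k := mul_comm _ _
  have hz_up : z * k ≤ (2 * t + 9) * m := by
    have h1 : z * k ≤ (A / k + 1) * k := Nat.mul_le_mul_right k (min_le_left _ _)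
    have h2 : (A / k + 1) * k = A / k * k + k := by ring
    have h3 : A / k * k ≤ A := Nat.div_mul_le_self A k
    have h4 : A + k ≤ (2 * t + 9) * m := by
      rw [hA]
      have : (2 * t + 9) * m = (2 * t + 8) * m + m := by ring
      rw [this]
      exact Nat.add_le_add_left hkm _
    omega
  have hz2 : 2 ≤ z := by
    rw [hzdef]
    have h1 : 1 ≤ A / k := (Nat.one_le_div_iff hkpos).2 hkA
    have h2 : 2 ≤ m := by omega
    omega
  have hzm : z ≤ m := min_le_right _ _
  have hzpos : 0 < z := by omega
  -- double counting
  set PS := P.powersetCard z with hPS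
  have hswap : ∑ q ∈ Qk, ((PS.filter (fun P' => t ≤ ((N q) ∩ P').card)).card)
      = ∑ P' ∈ PS, ((Qk.filter (fun q => t ≤ ((N q) ∩ P').card)).card) := by
    have h1 : ∀ q ∈ Qk, (PS.filter (fun P' => t ≤ ((N q) ∩ P').card)).card
        = ∑ P' ∈ PS, if t ≤ ((N q) ∩ P').card then 1 else 0 := fun q _ =>
      Finset.card_filter _ _
    have h2 : ∀ P' ∈ PS, (Qk.filter (fun q => t ≤ ((N q) ∩ P').card)).card
        = ∑ q ∈ Qk, if t ≤ ((N q) ∩ P').card then 1 else 0 := fun P' _ =>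
      Finset.card_filter _ _
    rw [Finset.sum_congr rfl h1, Finset.sum_congr rfl h2]
    exact Finset.sum_comm
  -- lower bound each summand via cheb
  have hlow : ∀ q ∈ Qk, ((m.choose z : ℕ) : ℝ)
      ≤ 2 * ((PS.filter (fun P' => t ≤ ((N q) ∩ P').card)).card : ℝ) := by
    intro q hq
    rw [hQk, Finset.mem_filter] at hq
    have hsub : N q ⊆ P := Finset.filter_subset _ _
    have hμ : (2 * t + 8) * P.card ≤ z * (N q).card := by
      calc (2 * t + 8) * P.card ≤ z * k := hz_low
        _ ≤ z * (N q).card := Nat.mul_le_mul_left _ hq.2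
    exact cheb hsub t z hz2 hzm hμ
  -- upper bound each P' summand via trace_bound
  have hup : ∀ P' ∈ PS, ((Qk.filter (fun q => t ≤ ((N q) ∩ P').card)).card : ℝ)
      ≤ ((t : ℝ) - 1) * (c * (z : ℝ) ^ d₀) := by
    intro P' hP'
    rw [hPS, Finset.mem_powersetCard] at hP'
    exact trace_bound d₀ t c P Q E ht hShatter hKtt z hzpos P' hP'.1 hP'.2 Qk
      (by rw [hQk]; exact Finset.filter_subset _ _)
  -- combine
  have hchoosepos : 0 < m.choose z := Nat.choose_pos hzm
  have hcomb : (Qk.card : ℝ) * ((m.choose z : ℕ) : ℝ)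
      ≤ 2 * ((m.choose z : ℕ) : ℝ) * (((t : ℝ) - 1) * (c * (z : ℝ) ^ d₀)) := by
    calc (Qk.card : ℝ) * ((m.choose z : ℕ) : ℝ)
        = ∑ _q ∈ Qk, ((m.choose z : ℕ) : ℝ) := by rw [Finset.sum_const, nsmul_eq_mul]
      _ ≤ ∑ q ∈ Qk, 2 * ((PS.filter (fun P' => t ≤ ((N q) ∩ P').card)).card : ℝ) :=
          Finset.sum_le_sum hlow
      _ = 2 * ∑ q ∈ Qk, ((PS.filter (fun P' => t ≤ ((N q) ∩ P').card)).card : ℝ) := by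
          rw [Finset.mul_sum]
      _ = 2 * ∑ P' ∈ PS, ((Qk.filter (fun q => t ≤ ((N q) ∩ P').card)).card : ℝ) := by
          congr 1
          exact_mod_cast congrArg (fun x : ℕ => (x : ℝ)) hswap
      _ ≤ 2 * ∑ _P' ∈ PS, ((t : ℝ) - 1) * (c * (z : ℝ) ^ d₀) := by
          apply mul_le_mul_of_nonneg_left (Finset.sum_le_sum hup) (by norm_num)
      _ = 2 * ((PS.card : ℝ) * (((t : ℝ) - 1) * (c * (z : ℝ) ^ d₀))) := by
          rw [Finset.sum_const, nsmul_eq_mul]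
      _ = 2 * ((m.choose z : ℕ) : ℝ) * (((t : ℝ) - 1) * (c * (z : ℝ) ^ d₀)) := by
          rw [hPS, Finset.card_powersetCard]
          ring
  have hchoosepos' : (0 : ℝ) < ((m.choose z : ℕ) : ℝ) := by exact_mod_cast hchoosepos
  have hQkb : (Qk.card : ℝ) ≤ 2 * (((t : ℝ) - 1) * (c * (z : ℝ) ^ d₀)) := by
    have := hcomb
    have h2 : (Qk.card : ℝ) * ((m.choose z : ℕ) : ℝ)
        ≤ (2 * (((t : ℝ) - 1) * (c * (z : ℝ) ^ d₀))) * ((m.choose z : ℕ) : ℝ) := by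
      linarith [hcomb]
    exact le_of_mul_le_mul_right h2 hchoosepos'
  -- z ≤ (2t+9) m / k
  have hzreal : (z : ℝ) ≤ (2 * (t : ℝ) + 9) * ((m : ℝ) / (k : ℝ)) := by
    have hcast : ((z * k : ℕ) : ℝ) ≤ (((2 * t + 9) * m : ℕ) : ℝ) := by exact_mod_cast hz_up
    push_cast at hcast
    have hkpos' : (0 : ℝ) < (k : ℝ) := by exact_mod_cast hkpos
    calc (z : ℝ) = (z : ℝ) * (k : ℝ) / (k : ℝ) := by field_simp
      _ ≤ (2 * (t : ℝ) + 9) * (m : ℝ) / (k : ℝ) := by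
          gcongr

      _ = (2 * (t : ℝ) + 9) * ((m : ℝ) / (k : ℝ)) := by ring
  have hzd : ((z : ℝ)) ^ d₀ ≤ ((2 * (t : ℝ) + 9) * ((m : ℝ) / (k : ℝ))) ^ d₀ := by
    apply pow_le_pow_left₀ (by positivity) hzreal
  have ht1 : (1 : ℝ) ≤ (t : ℝ) := by exact_mod_cast ht
  calc (Qk.card : ℝ) ≤ 2 * (((t : ℝ) - 1) * (c * (z : ℝ) ^ d₀)) := hQkb
    _ ≤ 2 * ((t : ℝ) * (c * ((2 * (t : ℝ) + 9) * ((m : ℝ) / (k : ℝ))) ^ d₀)) := by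
        have h1 : c * (z : ℝ) ^ d₀ ≤ c * ((2 * (t : ℝ) + 9) * ((m : ℝ) / (k : ℝ))) ^ d₀ :=
          mul_le_mul_of_nonneg_left hzd (le_of_lt hc)
        have h2 : (0 : ℝ) ≤ c * (z : ℝ) ^ d₀ := by positivity
        nlinarith [h1, h2, ht1]
    _ = (2 * (t : ℝ) * c * (2 * (t : ℝ) + 9) ^ d₀) * ((m : ℝ) / (k : ℝ)) ^ d₀ := by
        rw [mul_pow]
        ring

lemma card_E_eq {α β : Type} [DecidableEq α] [DecidableEq β]
    (P : Finset α) (Q : Finset β) (E : Finset (α × β))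
    (hE : ∀ e ∈ E, e.1 ∈ P ∧ e.2 ∈ Q) :
    E.card = ∑ q ∈ Q, (P.filter fun p => (p, q) ∈ E).card := by
  rw [Finset.card_eq_sum_card_fiberwise (f := Prod.snd) (t := Q) (fun e he => (hE e he).2)]
  apply Finset.sum_congr rfl
  intro q hq
  apply Finset.card_bij (fun e _ => e.1)
  · intro e he
    rw [Finset.mem_filter] at he ⊢
    obtain ⟨he1, he2⟩ := he
    refine ⟨(hE e he1).1, ?_⟩
    have : e = (e.1, q) := by rw [← he2]
    rwa [← this]
  · intro e1 he1 e2 he2 h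
    rw [Finset.mem_filter] at he1 he2
    have : e1.2 = e2.2 := by rw [he1.2, he2.2]
    exact Prod.ext h this
  · intro p hp
    rw [Finset.mem_filter] at hp
    exact ⟨(p, q), Finset.mem_filter.2 ⟨hp.2, rfl⟩, rfl⟩

lemma layer_sum {β : Type} [DecidableEq β] (Q : Finset β) (f : β → ℕ) (m : ℕ)
    (hf : ∀ q ∈ Q, f q ≤ m) :
    ∑ q ∈ Q, f q = ∑ k ∈ Finset.range m, (Q.filter fun q => k + 1 ≤ f q).card := by
  have h1 : ∀ k, (Q.filter fun q => k + 1 ≤ f q).card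
      = ∑ q ∈ Q, if k + 1 ≤ f q then 1 else 0 := fun k => Finset.card_filter _ _
  rw [Finset.sum_congr rfl fun k _ => h1 k, Finset.sum_comm]
  apply Finset.sum_congr rfl
  intro q hq
  have h2 : ∑ k ∈ Finset.range m, (if k + 1 ≤ f q then 1 else 0)
      = ((Finset.range m).filter fun k => k + 1 ≤ f q).card := (Finset.card_filter _ _).symm
  rw [h2]
  have h3 : (Finset.range m).filter (fun k => k + 1 ≤ f q) = Finset.range (f q) := by
    ext k
    simp only [Finset.mem_filter, Finset.mem_range]
    have := hf q hq
    omega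
  rw [h3, Finset.card_range]

lemma sum_inv_sq (K : ℕ) (hK : 1 ≤ K) :
    ∀ m : ℕ, ∑ k ∈ Finset.Ico K m, ((1 : ℝ) / ((k : ℝ) + 1)) ^ 2 ≤ 1 / (K : ℝ) := by
  have key : ∀ m : ℕ, K ≤ m →
      ∑ k ∈ Finset.Ico K m, ((1 : ℝ) / ((k : ℝ) + 1)) ^ 2 ≤ 1 / (K : ℝ) - 1 / (m : ℝ) := by
    intro m hm'
    induction m, hm' using Nat.le_induction with
    | base =>
        rw [Finset.Ico_self, Finset.sum_empty]
        simp
    | succ m hm ih =>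
        rw [Finset.sum_Ico_succ_top hm]
        have hm1 : (1 : ℝ) ≤ (m : ℝ) := by exact_mod_cast le_trans hK hm
        have hstep : ((1 : ℝ) / ((m : ℝ) + 1)) ^ 2 ≤ 1 / (m : ℝ) - 1 / ((m : ℝ) + 1) := by
          have h1 : ((1 : ℝ) / ((m : ℝ) + 1)) ^ 2 = 1 / (((m : ℝ) + 1) ^ 2) := by
            rw [div_pow, one_pow]
          have h2 : (1 : ℝ) / (m : ℝ) - 1 / ((m : ℝ) + 1) = 1 / ((m : ℝ) * ((m : ℝ) + 1)) := by
            field_simp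
            ring
          rw [h1, h2]
          apply one_div_le_one_div_of_le (by nlinarith) (by nlinarith)
        push_cast
        linarith [ih, hstep]
  intro m
  by_cases hm : K ≤ m
  · have := key m hm
    have hm0 : (0 : ℝ) < (m : ℝ) := by
      have : 1 ≤ m := le_trans hK hm
      exact_mod_cast Nat.lt_of_lt_of_le Nat.zero_lt_one this
    have : (0:ℝ) ≤ 1 / (m:ℝ) := by positivity
    linarith [key m hm]
  · push_neg at hm
    rw [Finset.Ico_eq_empty (by omega), Finset.sum_empty]
    positivity

set_option maxHeartbeats 1000000 in
theorem stmt6 (d₀ t : ℕ) (hd : 2 ≤ d₀) (ht : 1 ≤ t) (c : ℝ) (hc : 0 < c) :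
    ∃ c₁ : ℝ, ∀ (α β : Type) [DecidableEq α] [DecidableEq β]
      (P : Finset α) (Q : Finset β) (E : Finset (α × β)),
      (∀ e ∈ E, e.1 ∈ P ∧ e.2 ∈ Q) →
      (∀ z : ℕ, 0 < z → ∀ P' ⊆ P, P'.card = z →
        (({T | ∃ q ∈ Q, T = (P.filter fun p => (p, q) ∈ E) ∩ P'} :
          Set (Finset α)).ncard : ℝ) ≤ c * (z : ℝ) ^ d₀) →
      (¬ ∃ (P'' : Finset α) (Q'' : Finset β), P'' ⊆ P ∧ Q'' ⊆ Q ∧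
        P''.card = t ∧ Q''.card = t ∧ ∀ p ∈ P'', ∀ q ∈ Q'', (p, q) ∈ E) →
      (E.card : ℝ) ≤
        c₁ * ((P.card : ℝ) * (Q.card : ℝ) ^ ((1 : ℝ) - 1 / (d₀ : ℝ)) + (Q.card : ℝ)) := by
  have ht1 : (1 : ℝ) ≤ (t : ℝ) := by exact_mod_cast ht
  set C₂ : ℝ := 2 * (t : ℝ) * c * (2 * (t : ℝ) + 9) ^ d₀ with hC₂
  have hC₂pos : 0 < C₂ := by
    rw [hC₂]
    have h1 : (0 : ℝ) < 2 * (t : ℝ) := by linarith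
    have h2 : (0 : ℝ) < (2 * (t : ℝ) + 9) ^ d₀ := by positivity
    exact mul_pos (mul_pos h1 hc) h2
  set cr : ℝ := C₂ ^ ((d₀ : ℝ)⁻¹) with hcr
  have hcr0 : 0 ≤ cr := by rw [hcr]; exact Real.rpow_nonneg (le_of_lt hC₂pos) _
  clear_value C₂ cr
  refine ⟨2 * ((2 * (t : ℝ) + 8) + 1) + 2 * cr, ?_⟩
  intro α β _ _ P Q E hE hShatter hKtt
  set m := P.card with hm
  set n := Q.card with hn
  have hd0 : (d₀ : ℕ) ≠ 0 := by omega
  have hexp : (0 : ℝ) < (1 : ℝ) - 1 / (d₀ : ℝ) := by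
    have : (2 : ℝ) ≤ (d₀ : ℝ) := by exact_mod_cast hd
    have h1 : 1 / (d₀ : ℝ) ≤ 1 / 2 := by
      apply one_div_le_one_div_of_le <;> linarith
    linarith
  by_cases hn0 : n = 0
  · -- Q is empty, so E is empty
    have hQ : Q = ∅ := Finset.card_eq_zero.1 hn0
    have hEe : E = ∅ := by
      rw [Finset.eq_empty_iff_forall_notMem]
      intro e he
      have := (hE e he).2
      rw [hQ] at this
      exact absurd this (Finset.notMem_empty _)
    rw [hEe, hn0]
    simp only [Finset.card_empty, Nat.cast_zero]
    rw [Real.zero_rpow (by linarith)]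
    norm_num
  have hn1 : 1 ≤ n := Nat.one_le_iff_ne_zero.2 hn0
  have hn1r : (1 : ℝ) ≤ (n : ℝ) := by exact_mod_cast hn1
  have hnpos : (0 : ℝ) < (n : ℝ) := by linarith
  -- edge count as layered sum
  set deg : β → ℕ := fun q => (P.filter fun p => (p, q) ∈ E).card with hdeg
  have hdegle : ∀ q ∈ Q, deg q ≤ m := fun q _ =>
    Finset.card_le_card (Finset.filter_subset _ _)
  have he1 : E.card = ∑ k ∈ Finset.range m, (Q.filter fun q => k + 1 ≤ deg q).card := by
    rw [card_E_eq P Q E hE]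
    exact layer_sum Q deg m hdegle
  -- the threshold
  set x : ℝ := cr * (m : ℝ) / (n : ℝ) ^ ((d₀ : ℝ)⁻¹) with hx
  have hnr_pos : (0 : ℝ) < (n : ℝ) ^ ((d₀ : ℝ)⁻¹) := Real.rpow_pos_of_pos hnpos _
  have hx0 : 0 ≤ x := by
    rw [hx]
    exact div_nonneg (mul_nonneg hcr0 (Nat.cast_nonneg m)) (le_of_lt hnr_pos)
  set K : ℕ := (2 * t + 8) + ⌈x⌉₊ with hK
  have hK0 : 2 * t + 8 ≤ K := by rw [hK]; omega
  have hK1 : 1 ≤ K := by omega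
  have hKr1 : (1 : ℝ) ≤ (K : ℝ) := by exact_mod_cast hK1
  have hKrpos : (0 : ℝ) < (K : ℝ) := by linarith
  clear_value x K
  have hKgex : x ≤ (K : ℝ) := by
    calc x ≤ (⌈x⌉₊ : ℝ) := Nat.le_ceil x
      _ ≤ (K : ℝ) := by rw [hK]; exact_mod_cast Nat.le_add_left _ _
  have hKle : (K : ℝ) ≤ (2 * (t : ℝ) + 8) + x + 1 := by
    have h1 : (⌈x⌉₊ : ℝ) < x + 1 := Nat.ceil_lt_add_one hx0
    have h2 : (K : ℝ) = (2 * (t : ℝ) + 8) + (⌈x⌉₊ : ℝ) := by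
      rw [hK]; push_cast; ring
    linarith
  -- key: C₂ * (m/K)^d₀ ≤ n
  have hCK : C₂ * ((m : ℝ) / (K : ℝ)) ^ d₀ ≤ (n : ℝ) := by
    have hxd : x ^ d₀ ≤ (K : ℝ) ^ d₀ := pow_le_pow_left₀ hx0 hKgex d₀
    have hxval : x ^ d₀ = C₂ * (m : ℝ) ^ d₀ / (n : ℝ) := by
      rw [hx, div_pow, mul_pow, hcr]
      rw [Real.rpow_inv_natCast_pow (le_of_lt hC₂pos) hd0,
        Real.rpow_inv_natCast_pow (le_of_lt hnpos) hd0]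
    rw [hxval] at hxd
    have h2 : C₂ * (m : ℝ) ^ d₀ ≤ (K : ℝ) ^ d₀ * (n : ℝ) := by
      rw [div_le_iff₀ hnpos] at hxd
      exact hxd
    have hKd : (0 : ℝ) < (K : ℝ) ^ d₀ := pow_pos hKrpos _
    have h3 : C₂ * ((m : ℝ) / (K : ℝ)) ^ d₀ = C₂ * (m : ℝ) ^ d₀ / (K : ℝ) ^ d₀ := by
      rw [div_pow]; ring
    rw [h3, div_le_iff₀ hKd]
    linarith [h2]
  -- split the sum
  have hsplit := Finset.sum_filter_add_sum_filter_not (Finset.range m)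
    (fun k => k < K) (fun k => ((Q.filter fun q => k + 1 ≤ deg q).card : ℝ))
  -- part 1
  have hpart1 : ∑ k ∈ (Finset.range m).filter (fun k => k < K),
      ((Q.filter fun q => k + 1 ≤ deg q).card : ℝ) ≤ (K : ℝ) * (n : ℝ) := by
    have hterm : ∀ k ∈ (Finset.range m).filter (fun k => k < K),
        ((Q.filter fun q => k + 1 ≤ deg q).card : ℝ) ≤ (n : ℝ) := by
      intro k _
      exact_mod_cast Finset.card_le_card (Finset.filter_subset _ _)
    calc ∑ k ∈ (Finset.range m).filter (fun k => k < K),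
        ((Q.filter fun q => k + 1 ≤ deg q).card : ℝ)
        ≤ ∑ _k ∈ (Finset.range m).filter (fun k => k < K), (n : ℝ) :=
          Finset.sum_le_sum hterm
      _ = (((Finset.range m).filter (fun k => k < K)).card : ℝ) * (n : ℝ) := by
          rw [Finset.sum_const, nsmul_eq_mul]
      _ ≤ (K : ℝ) * (n : ℝ) := by
          apply mul_le_mul_of_nonneg_right _ (le_of_lt hnpos)
          have hsub : (Finset.range m).filter (fun k => k < K) ⊆ Finset.range K := by
            intro k hk
            rw [Finset.mem_filter] at hk
            exact Finset.mem_range.2 hk.2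
          have := Finset.card_le_card hsub
          rw [Finset.card_range] at this
          exact_mod_cast this
  -- part 2
  have hIco : (Finset.range m).filter (fun k => ¬ k < K) = Finset.Ico K m := by
    ext k
    simp only [Finset.mem_filter, Finset.mem_range, Finset.mem_Ico, not_lt]
    omega
  have hpart2 : ∑ k ∈ (Finset.range m).filter (fun k => ¬ k < K),
      ((Q.filter fun q => k + 1 ≤ deg q).card : ℝ) ≤ (n : ℝ) * (K : ℝ) := by
    rw [hIco]
    have hterm : ∀ k ∈ Finset.Ico K m, ((Q.filter fun q => k + 1 ≤ deg q).card : ℝ)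
        ≤ (C₂ * (m : ℝ) ^ d₀ / (K : ℝ) ^ d₀) * (K : ℝ) ^ 2 * ((1 : ℝ) / ((k : ℝ) + 1)) ^ 2 := by
      intro k hk
      rw [Finset.mem_Ico] at hk
      have hkK : K ≤ k := hk.1
      have hstep1 : ((Q.filter fun q => k + 1 ≤ deg q).card : ℝ)
          ≤ C₂ * ((m : ℝ) / ((k : ℝ) + 1)) ^ d₀ := by
        have hca := claimA d₀ t c P Q E hc ht hShatter hKtt (k + 1) (by omega)
        have hcast : (((k + 1 : ℕ)) : ℝ) = (k : ℝ) + 1 := by push_cast; ring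
        rw [hcast, ← hC₂] at hca
        exact hca
      have hk1pos : (0 : ℝ) < (k : ℝ) + 1 := by positivity
      have hKk : (K : ℝ) ≤ (k : ℝ) + 1 := by
        have : (K : ℝ) ≤ (k : ℝ) := by exact_mod_cast hkK
        linarith
      have hpowsplit : ((k : ℝ) + 1) ^ d₀ = ((k : ℝ) + 1) ^ (d₀ - 2) * ((k : ℝ) + 1) ^ 2 := by
        rw [← pow_add]
        congr 1
        omega
      have hKsplit : (K : ℝ) ^ d₀ = (K : ℝ) ^ (d₀ - 2) * (K : ℝ) ^ 2 := by
        rw [← pow_add]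
        congr 1
        omega
      have hpow : (K : ℝ) ^ (d₀ - 2) * ((k : ℝ) + 1) ^ 2 ≤ ((k : ℝ) + 1) ^ d₀ := by
        rw [hpowsplit]
        apply mul_le_mul_of_nonneg_right _ (by positivity)
        exact pow_le_pow_left₀ (le_of_lt hKrpos) hKk _
      have hstep2 : C₂ * ((m : ℝ) / ((k : ℝ) + 1)) ^ d₀
          ≤ (C₂ * (m : ℝ) ^ d₀ / (K : ℝ) ^ d₀) * (K : ℝ) ^ 2 * ((1 : ℝ) / ((k : ℝ) + 1)) ^ 2 := by
        have hlhs : C₂ * ((m : ℝ) / ((k : ℝ) + 1)) ^ d₀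
            = C₂ * (m : ℝ) ^ d₀ * (1 / (((k : ℝ) + 1) ^ d₀)) := by
          rw [div_pow]; ring
        have hrhs : (C₂ * (m : ℝ) ^ d₀ / (K : ℝ) ^ d₀) * (K : ℝ) ^ 2 * ((1 : ℝ) / ((k : ℝ) + 1)) ^ 2
            = C₂ * (m : ℝ) ^ d₀ * (1 / ((K : ℝ) ^ (d₀ - 2) * ((k : ℝ) + 1) ^ 2)) := by
          rw [hKsplit]
          field_simp
        rw [hlhs, hrhs]
        apply mul_le_mul_of_nonneg_left _
          (mul_nonneg (le_of_lt hC₂pos) (pow_nonneg (Nat.cast_nonneg m) _))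
        apply one_div_le_one_div_of_le
          (mul_pos (pow_pos hKrpos _) (by positivity)) hpow
      exact hstep1.trans hstep2
    calc ∑ k ∈ Finset.Ico K m, ((Q.filter fun q => k + 1 ≤ deg q).card : ℝ)
        ≤ ∑ k ∈ Finset.Ico K m,
          (C₂ * (m : ℝ) ^ d₀ / (K : ℝ) ^ d₀) * (K : ℝ) ^ 2 * ((1 : ℝ) / ((k : ℝ) + 1)) ^ 2 :=
          Finset.sum_le_sum hterm
      _ = (C₂ * (m : ℝ) ^ d₀ / (K : ℝ) ^ d₀) * (K : ℝ) ^ 2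
          * ∑ k ∈ Finset.Ico K m, ((1 : ℝ) / ((k : ℝ) + 1)) ^ 2 := by
          rw [Finset.mul_sum]
      _ ≤ (C₂ * (m : ℝ) ^ d₀ / (K : ℝ) ^ d₀) * (K : ℝ) ^ 2 * (1 / (K : ℝ)) := by
          apply mul_le_mul_of_nonneg_left (sum_inv_sq K hK1 m)
          apply mul_nonneg _ (by positivity)
          apply div_nonneg (mul_nonneg (le_of_lt hC₂pos) (by positivity)) (by positivity)
      _ = (C₂ * ((m : ℝ) / (K : ℝ)) ^ d₀) * (K : ℝ) := by
          have hKK : (K : ℝ) ^ 2 * (1 / (K : ℝ)) = (K : ℝ) := by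
            rw [one_div, sq, mul_assoc, mul_inv_cancel₀ (ne_of_gt hKrpos), mul_one]
          calc (C₂ * (m : ℝ) ^ d₀ / (K : ℝ) ^ d₀) * (K : ℝ) ^ 2 * (1 / (K : ℝ))
              = (C₂ * (m : ℝ) ^ d₀ / (K : ℝ) ^ d₀) * ((K : ℝ) ^ 2 * (1 / (K : ℝ))) := by ring
            _ = (C₂ * (m : ℝ) ^ d₀ / (K : ℝ) ^ d₀) * (K : ℝ) := by rw [hKK]
            _ = (C₂ * ((m : ℝ) / (K : ℝ)) ^ d₀) * (K : ℝ) := by rw [div_pow]; ring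
      _ ≤ (n : ℝ) * (K : ℝ) := mul_le_mul_of_nonneg_right hCK (le_of_lt hKrpos)
  -- combine
  have hEbound : (E.card : ℝ) ≤ 2 * (K : ℝ) * (n : ℝ) := by
    have hcast : (E.card : ℝ) = ∑ k ∈ Finset.range m,
        ((Q.filter fun q => k + 1 ≤ deg q).card : ℝ) := by
      rw [he1]
      push_cast
      rfl
    rw [hcast, ← hsplit]
    linarith [hpart1, hpart2]
  have hxn : x * (n : ℝ) = cr * (m : ℝ) * (n : ℝ) ^ ((1 : ℝ) - 1 / (d₀ : ℝ)) := by
    rw [hx]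
    have hnrw : (n : ℝ) ^ ((1 : ℝ) - 1 / (d₀ : ℝ))
        = (n : ℝ) / (n : ℝ) ^ ((d₀ : ℝ)⁻¹) := by
      rw [one_div, Real.rpow_sub hnpos, Real.rpow_one]
    rw [hnrw]
    field_simp
  have hrpow0 : (0 : ℝ) ≤ (m : ℝ) * (n : ℝ) ^ ((1 : ℝ) - 1 / (d₀ : ℝ)) := by
    have := Real.rpow_nonneg (le_of_lt hnpos) ((1 : ℝ) - 1 / (d₀ : ℝ))
    positivity
  calc (E.card : ℝ) ≤ 2 * (K : ℝ) * (n : ℝ) := hEbound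
    _ ≤ 2 * ((2 * (t : ℝ) + 8) + x + 1) * (n : ℝ) := by
        apply mul_le_mul_of_nonneg_right _ (le_of_lt hnpos)
        linarith [hKle]
    _ = 2 * ((2 * (t : ℝ) + 8) + 1) * (n : ℝ) + 2 * (x * (n : ℝ)) := by ring
    _ = 2 * ((2 * (t : ℝ) + 8) + 1) * (n : ℝ)
        + 2 * cr * ((m : ℝ) * (n : ℝ) ^ ((1 : ℝ) - 1 / (d₀ : ℝ))) := by
        rw [hxn]; ring
    _ ≤ (2 * ((2 * (t : ℝ) + 8) + 1) + 2 * cr)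
        * ((m : ℝ) * (n : ℝ) ^ ((1 : ℝ) - 1 / (d₀ : ℝ)) + (n : ℝ)) := by
        nlinarith [hrpow0, hnpos, hcr0, ht1]
end
end

section
/- For every integer d ≥ 2 there exists a constant c₅ = c₅(d) with the following property. Let n and D be positive integers with D dividing n, and partition the lattice cube [n]^d into D^d axis-parallel subcubes, where for each (i₁, …, i_d) ∈ {0, …, D−1}^d the subcube is {i₁·(n/D)+1, …, (i₁+1)·(n/D)} × ⋯ × {i_d·(n/D)+1, …, (i_d+1)·(n/D)}. Then every sphere in ℝ^d has nonempty intersection with at most c₅ · D^{d−1} of these subcubes. -/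
noncomputable section

open Finset

lemma card_fixed (d D : ℕ) (j : Fin d) (z : Fin D) :
    (Finset.univ.filter (fun g : Fin d → Fin D => g j = z)).card = D ^ (d - 1) := by
  classical
  have h1 : (Finset.univ.filter (fun g : Fin d → Fin D => g j = z)).card
      = (Finset.univ : Finset ({k : Fin d // k ≠ j} → Fin D)).card := by
    apply Finset.card_bij' (fun g _ => fun k => g k.1)
      (fun h _ => fun k => if hk : k = j then z else h ⟨k, hk⟩)
    · intro g hg
      simp only [mem_filter, mem_univ, true_and] at hg
      funext k
      by_cases hk : k = j <;> simp [hk, hg]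
    · intro h hh
      funext k
      simp [k.2]
    · intros; simp
    · intro h hh
      simp only [mem_filter, mem_univ, true_and]
      simp
  rw [h1, Finset.card_univ, Fintype.card_fun, Fintype.card_fin]
  congr 1
  rw [Fintype.card_subtype_compl, Fintype.card_subtype_eq, Fintype.card_fin]
set_option maxHeartbeats 800000 in
lemma key_lemma (d : ℕ) (hd : 2 ≤ d) (m r : ℝ) (hm : 0 ≤ m) (hr : 0 < r)
    (c x y : Fin d → ℝ) (j : Fin d)
    (hx : ∑ k, (x k - c k)^2 = r^2) (hy : ∑ k, (y k - c k)^2 = r^2)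
    (hxj : (r/d)^2 ≤ (x j - c j)^2) (hyj : (r/d)^2 ≤ (y j - c j)^2)
    (hsign : (0 ≤ x j - c j) ↔ (0 ≤ y j - c j))
    (hclose : ∀ k, k ≠ j → |x k - y k| ≤ m) :
    |x j - y j| ≤ (d:ℝ)^2 * m := by
  have hd1 : (2:ℝ) ≤ (d:ℝ) := by exact_mod_cast hd
  have hdpos : (0:ℝ) < d := by linarith
  have hbound : ∀ k, (x k - c k)^2 ≤ r^2 ∧ (y k - c k)^2 ≤ r^2 := by
    intro k
    constructor
    · rw [← hx]
      exact Finset.single_le_sum (f := fun k => (x k - c k)^2)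
        (fun i _ => sq_nonneg _) (Finset.mem_univ k)
    · rw [← hy]
      exact Finset.single_le_sum (f := fun k => (y k - c k)^2)
        (fun i _ => sq_nonneg _) (Finset.mem_univ k)
  have hsx : (x j - c j)^2 + ∑ k ∈ Finset.univ.erase j, (x k - c k)^2 = r^2 := by
    rw [← hx]
    exact Finset.add_sum_erase _ (fun k => (x k - c k)^2) (Finset.mem_univ j)
  have hsy : (y j - c j)^2 + ∑ k ∈ Finset.univ.erase j, (y k - c k)^2 = r^2 := by
    rw [← hy]
    exact Finset.add_sum_erase _ (fun k => (y k - c k)^2) (Finset.mem_univ j)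
  set a := x j - c j with ha
  set b := y j - c j with hb
  have hdiff : a^2 - b^2 = ∑ k ∈ Finset.univ.erase j, ((y k - c k)^2 - (x k - c k)^2) := by
    rw [Finset.sum_sub_distrib]
    linarith
  have hterm : ∀ k ∈ Finset.univ.erase j, |(y k - c k)^2 - (x k - c k)^2| ≤ 2*r*m := by
    intro k hk
    have hk' : k ≠ j := (Finset.mem_erase.mp hk).1
    have h1 := hclose k hk'
    have h2 := (hbound k).1
    have h3 := (hbound k).2
    have hxr : |x k - c k| ≤ r := by
      rw [abs_le]; constructor <;> nlinarith
    have hyr : |y k - c k| ≤ r := by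
      rw [abs_le]; constructor <;> nlinarith
    have hre : (y k - c k)^2 - (x k - c k)^2 = (y k - x k) * ((y k - c k) + (x k - c k)) := by
      ring
    rw [hre, abs_mul]
    have h4 : |y k - x k| ≤ m := by rwa [abs_sub_comm]
    have h5 : |(y k - c k) + (x k - c k)| ≤ 2*r := by
      calc |(y k - c k) + (x k - c k)| ≤ |y k - c k| + |x k - c k| := abs_add_le _ _
        _ ≤ 2*r := by linarith
    calc |y k - x k| * |(y k - c k) + (x k - c k)| ≤ m * (2*r) :=
          mul_le_mul h4 h5 (abs_nonneg _) hm
      _ = 2*r*m := by ring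
  have hsum : |a^2 - b^2| ≤ 2*(d:ℝ)*r*m := by
    rw [hdiff]
    calc |∑ k ∈ Finset.univ.erase j, ((y k - c k)^2 - (x k - c k)^2)|
        ≤ ∑ k ∈ Finset.univ.erase j, |(y k - c k)^2 - (x k - c k)^2| :=
          Finset.abs_sum_le_sum_abs _ _
      _ ≤ (Finset.univ.erase j).card • (2*r*m) := Finset.sum_le_card_nsmul _ _ _ hterm
      _ ≤ (d:ℝ) * (2*r*m) := by
          rw [nsmul_eq_mul]
          apply mul_le_mul_of_nonneg_right _ (by positivity)
          have hcd : (Finset.univ.erase j).card ≤ d := by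
            calc (Finset.univ.erase j).card ≤ (Finset.univ : Finset (Fin d)).card :=
                  Finset.card_le_card (Finset.erase_subset _ _)
              _ = d := by simp
          exact_mod_cast hcd
      _ = 2*(d:ℝ)*r*m := by ring
  have hrd : 0 < r / d := div_pos hr hdpos
  have hA : r/d ≤ |a| := by
    have h := Real.sqrt_le_sqrt hxj
    rwa [Real.sqrt_sq hrd.le, Real.sqrt_sq_eq_abs] at h
  have hB : r/d ≤ |b| := by
    have h := Real.sqrt_le_sqrt hyj
    rwa [Real.sqrt_sq hrd.le, Real.sqrt_sq_eq_abs] at h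
  have heq : |x j - y j| = |(|a| - |b|)| := by
    have hab : x j - y j = a - b := by rw [ha, hb]; ring
    rw [hab]
    rcases le_or_gt 0 a with h0 | h0
    · have h0' : 0 ≤ b := hsign.mp h0
      rw [abs_of_nonneg h0, abs_of_nonneg h0']
    · have h0' : b < 0 := by
        by_contra hc
        push_neg at hc
        exact absurd (hsign.mpr hc) (not_le.mpr h0)
      rw [abs_of_neg h0, abs_of_neg h0', ← abs_neg]
      congr 1; ring
  rw [heq]
  have hfac : |(|a| - |b|)| * (|a| + |b|) = |a^2 - b^2| := by
    have hre2 : a^2 - b^2 = (|a| - |b|) * (|a| + |b|) := by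
      rw [← sq_abs a, ← sq_abs b]; ring
    rw [hre2, abs_mul, abs_of_nonneg (by positivity : (0:ℝ) ≤ |a| + |b|)]
  have hab2 : 2*(r/d) ≤ |a| + |b| := by linarith
  have h6 : |(|a| - |b|)| * (2*(r/d)) ≤ 2*(d:ℝ)*r*m := by
    calc |(|a| - |b|)| * (2*(r/d)) ≤ |(|a| - |b|)| * (|a| + |b|) :=
          mul_le_mul_of_nonneg_left hab2 (abs_nonneg _)
      _ = |a^2 - b^2| := hfac
      _ ≤ 2*(d:ℝ)*r*m := hsum
  have h7 : |(|a| - |b|)| ≤ (2*(d:ℝ)*r*m) / (2*(r/d)) := by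
    rw [le_div_iff₀ (by positivity)]
    exact h6
  calc |(|a| - |b|)| ≤ (2*(d:ℝ)*r*m) / (2*(r/d)) := h7
    _ = (d:ℝ)^2 * m := by field_simp

set_option maxHeartbeats 1000000 in
theorem stmt7 (d : ℕ) (hd : 2 ≤ d) :
    ∃ c₅ : ℝ, ∀ n D : ℕ, 0 < n → 0 < D → D ∣ n →
      ∀ (ctr : EuclideanSpace ℝ (Fin d)) (r : ℝ), 0 < r →
        (({i : Fin d → Fin D | (Metric.sphere ctr r ∩
          {x : EuclideanSpace ℝ (Fin d) | ∀ j, ∃ k : ℤ,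
            (i j : ℤ) * ((n / D : ℕ) : ℤ) + 1 ≤ k ∧
            k ≤ ((i j : ℤ) + 1) * ((n / D : ℕ) : ℤ) ∧
            x j = (k : ℝ)}).Nonempty}).ncard : ℝ) ≤ c₅ * (D : ℝ) ^ (d - 1) := by
  classical
  refine ⟨(2*d*(2*d^2+3) : ℝ), ?_⟩
  intro n D hn hD hdvd ctr r hr
  set m : ℕ := n / D with hmdef
  have hm1 : 1 ≤ m := (Nat.one_le_div_iff hD).mpr (Nat.le_of_dvd hn hdvd)
  set P : (Fin d → Fin D) → Prop := fun i => (Metric.sphere ctr r ∩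
          {x : EuclideanSpace ℝ (Fin d) | ∀ j, ∃ k : ℤ,
            (i j : ℤ) * ((n / D : ℕ) : ℤ) + 1 ≤ k ∧
            k ≤ ((i j : ℤ) + 1) * ((n / D : ℕ) : ℤ) ∧
            x j = (k : ℝ)}).Nonempty with hP
  set T : Finset (Fin d → Fin D) := Finset.univ.filter P with hT
  have hncard : ({i : Fin d → Fin D | P i}).ncard = T.card := by
    have : {i : Fin d → Fin D | P i} = ↑T := by
      ext i; simp [hT]
    rw [this, Set.ncard_coe_finset]
  -- witness function
  set w : (Fin d → Fin D) → EuclideanSpace ℝ (Fin d) := fun i =>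
    if h : P i then h.choose else ctr with hw
  have hwP : ∀ i, P i → w i ∈ Metric.sphere ctr r ∧
      ∀ k, ((i k : ℝ) * m + 1 ≤ w i k ∧ w i k ≤ ((i k : ℝ) + 1) * m) := by
    intro i hi
    have hmem := hi.choose_spec
    have hwi : w i = hi.choose := by rw [hw]; simp [hi]
    rw [hwi]
    refine ⟨hmem.1, fun k => ?_⟩
    obtain ⟨kk, h1, h2, h3⟩ := hmem.2 k
    rw [h3]
    constructor
    · exact_mod_cast h1
    · rw [hmdef]; have h2' := (Int.cast_le (R := ℝ)).mpr h2; simp only [Int.cast_mul, Int.cast_add, Int.cast_one, Int.cast_natCast] at h2'; linarith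
  have hsphere : ∀ i, P i → ∑ k, (w i k - ctr k)^2 = r^2 := by
    intro i hi
    have h1 : dist (w i) ctr = r := (hwP i hi).1
    rw [EuclideanSpace.dist_eq] at h1
    have h2 : ∑ k, dist (w i k) (ctr k) ^ 2 = r ^ 2 := by
      rw [← h1, Real.sq_sqrt]
      positivity
    rw [← h2]
    apply Finset.sum_congr rfl
    intro k _
    rw [Real.dist_eq, sq_abs]
  -- direction choice
  have hdr : (0:ℝ) < (d:ℝ) := by positivity
  have hJex : ∀ i, P i → ∃ j, (r/(d:ℝ))^2 ≤ (w i j - ctr j)^2 := by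
    intro i hi
    by_contra hcon
    push_neg at hcon
    have hlt : ∑ k, (w i k - ctr k)^2 ≤ (Finset.univ : Finset (Fin d)).card • ((r/(d:ℝ))^2) :=
      Finset.sum_le_card_nsmul _ _ _ (fun k _ => (hcon k).le)
    rw [hsphere i hi] at hlt
    rw [Finset.card_univ, Fintype.card_fin, nsmul_eq_mul] at hlt
    have hd1 : (2:ℝ) ≤ (d:ℝ) := by exact_mod_cast hd
    have he : (d:ℝ) * (r / d)^2 = r^2 / d := by field_simp
    rw [he] at hlt
    have h2 : r^2 * (d:ℝ) ≤ r^2 := (le_div_iff₀ hdr).mp hlt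
    nlinarith [mul_pos hr hr]
  set J : (Fin d → Fin D) → Fin d := fun i =>
    if h : P i then (hJex i h).choose else ⟨0, by omega⟩ with hJ
  have hJspec : ∀ i, P i → (r/(d:ℝ))^2 ≤ (w i (J i) - ctr (J i))^2 := by
    intro i hi
    have : J i = (hJex i hi).choose := by rw [hJ]; simp [hi]
    rw [this]
    exact (hJex i hi).choose_spec
  set sg : (Fin d → Fin D) → Bool := fun i => decide (0 ≤ w i (J i) - ctr (J i)) with hsg
  set z₀ : Fin D := ⟨0, hD⟩ with hz
  -- main counting
  have hsplit : T.card = ∑ p ∈ (Finset.univ : Finset (Fin d × Bool)),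
      (T.filter (fun i => (J i, sg i) = p)).card :=
    Finset.card_eq_sum_card_fiberwise (fun i _ => Finset.mem_univ _)
  have hfiber : ∀ p : Fin d × Bool,
      (T.filter (fun i => (J i, sg i) = p)).card ≤ (2*d^2+3) * D^(d-1) := by
    intro ⟨j, s⟩
    set F := T.filter (fun i => (J i, sg i) = (j, s)) with hF
    have hcardt : (Finset.univ.filter (fun g : Fin d → Fin D => g j = z₀)).card = D^(d-1) :=
      card_fixed d D j z₀
    rw [← hcardt]
    apply Finset.card_le_mul_card_image_of_maps_to
      (f := fun i => Function.update i j z₀)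
    · intro i _
      simp [Function.update_self]
    · intro g hg
      set A := F.filter (fun i => Function.update i j z₀ = g) with hA
      rcases Finset.eq_empty_or_nonempty A with hAe | ⟨i₀, hi₀⟩
      · rw [hAe]; simp
      -- facts about members of A
      have hmemA : ∀ i ∈ A, P i ∧ J i = j ∧ sg i = s ∧ ∀ k, k ≠ j → i k = g k := by
        intro i hi
        rw [hA, hF, hT] at hi
        simp only [Finset.mem_filter, Finset.mem_univ, true_and, Prod.mk.injEq] at hi
        obtain ⟨⟨hiP, hij, his⟩, hupd⟩ := hi
        refine ⟨hiP, hij, his, fun k hk => ?_⟩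
        rw [← hupd]
        simp [Function.update_of_ne hk]
      have hi₀f := hmemA i₀ hi₀
      -- key: for i ∈ A, |(i j : ℤ) - (i₀ j : ℤ)| ≤ d^2 + 1
      have hkey : ∀ i ∈ A, ((i j : ℤ) - (i₀ j : ℤ)) ≤ d^2 + 1 ∧
          ((i₀ j : ℤ) - (i j : ℤ)) ≤ d^2 + 1 := by
        intro i hi
        have hif := hmemA i hi
        have hclose : ∀ k, k ≠ j → |w i k - w i₀ k| ≤ (m:ℝ) := by
          intro k hk
          have h1 := ((hwP i hif.1).2 k)
          have h2 := ((hwP i₀ hi₀f.1).2 k)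
          have hik : (i k : ℝ) = (i₀ k : ℝ) := by
            rw [hif.2.2.2 k hk, ← hi₀f.2.2.2 k hk]
          rw [abs_le]
          constructor <;> nlinarith [h1.1, h1.2, h2.1, h2.2]
        have hsgn : (0 ≤ w i j - ctr j) ↔ (0 ≤ w i₀ j - ctr j) := by
          have e1 : decide (0 ≤ w i (J i) - ctr (J i)) = s := hif.2.2.1
          have e2 : decide (0 ≤ w i₀ (J i₀) - ctr (J i₀)) = s := hi₀f.2.2.1
          rw [hif.2.1] at e1
          rw [hi₀f.2.1] at e2
          constructor
          · intro h
            have : decide (0 ≤ w i j - ctr j) = true := decide_eq_true h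
            have h2 : decide (0 ≤ w i₀ j - ctr j) = true := by rw [e2, ← e1, this]
            exact of_decide_eq_true h2
          · intro h
            have : decide (0 ≤ w i₀ j - ctr j) = true := decide_eq_true h
            have h2 : decide (0 ≤ w i j - ctr j) = true := by rw [e1, ← e2, this]
            exact of_decide_eq_true h2
        have hxj : (r/(d:ℝ))^2 ≤ (w i j - ctr j)^2 := by
          have := hJspec i hif.1; rwa [hif.2.1] at this
        have hyj : (r/(d:ℝ))^2 ≤ (w i₀ j - ctr j)^2 := by
          have := hJspec i₀ hi₀f.1; rwa [hi₀f.2.1] at this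
        have hkl := key_lemma d hd (m:ℝ) r (by positivity) hr (fun k => ctr k)
          (fun k => w i k) (fun k => w i₀ k) j
          (hsphere i hif.1) (hsphere i₀ hi₀f.1) hxj hyj hsgn hclose
        -- now translate to index bound
        have hb1 := (hwP i hif.1).2 j
        have hb2 := (hwP i₀ hi₀f.1).2 j
        have habs := abs_le.mp hkl
        have hd2 : ((d:ℝ))^2 * (m:ℝ) ≥ 0 := by positivity
        have hmpos : (0:ℝ) < (m:ℝ) := by exact_mod_cast hm1
        constructor
        · have hreal : ((i j : ℝ) - (i₀ j : ℝ)) ≤ (d:ℝ)^2 + 1 := by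
            nlinarith [hb1.1, hb2.2, habs.2]
          have : ((i j : ℤ) : ℝ) - ((i₀ j : ℤ) : ℝ) ≤ ((d:ℝ))^2 + 1 := by push_cast; push_cast at hreal; linarith
          exact_mod_cast this
        · have hreal : ((i₀ j : ℝ) - (i j : ℝ)) ≤ (d:ℝ)^2 + 1 := by
            nlinarith [hb2.1, hb1.2, habs.1]
          have : ((i₀ j : ℤ) : ℝ) - ((i j : ℤ) : ℝ) ≤ ((d:ℝ))^2 + 1 := by push_cast; push_cast at hreal; linarith
          exact_mod_cast this
      -- injection into Icc
      have hinj : Set.InjOn (fun i : Fin d → Fin D => (i j : ℤ)) ↑A := by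
        intro i hi i' hi' hij
        simp only at hij
        have hif := hmemA i (Finset.mem_coe.mp hi)
        have hif' := hmemA i' (Finset.mem_coe.mp hi')
        funext k
        by_cases hk : k = j
        · subst hk
          have hnn : (i k : ℕ) = (i' k : ℕ) := by exact_mod_cast hij
          exact Fin.ext hnn
        · rw [hif.2.2.2 k hk, hif'.2.2.2 k hk]
      have hmaps : ∀ i ∈ A, (i j : ℤ) ∈ Finset.Icc ((i₀ j : ℤ) - (d^2+1)) ((i₀ j : ℤ) + (d^2+1)) := by
        intro i hi
        rw [Finset.mem_Icc]
        have hk2 := hkey i hi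
        constructor
        · linarith [hk2.2]
        · linarith [hk2.1]
      calc A.card ≤ (Finset.Icc ((i₀ j : ℤ) - (d^2+1)) ((i₀ j : ℤ) + (d^2+1))).card :=
            Finset.card_le_card_of_injOn _ hmaps hinj
        _ = 2*d^2+3 := by
            rw [Int.card_Icc]
            have he1 : ((i₀ j:ℤ) + ((d:ℤ)^2+1) + 1 - ((i₀ j:ℤ) - ((d:ℤ)^2+1))) = ((2*d^2+3 : ℕ) : ℤ) := by
              push_cast; ring
            rw [he1, Int.toNat_natCast]
  -- combine
  have htotal : T.card ≤ 2*d*((2*d^2+3) * D^(d-1)) := by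
    rw [hsplit]
    calc ∑ p ∈ (Finset.univ : Finset (Fin d × Bool)),
        (T.filter (fun i => (J i, sg i) = p)).card
        ≤ ∑ _p ∈ (Finset.univ : Finset (Fin d × Bool)), (2*d^2+3) * D^(d-1) :=
          Finset.sum_le_sum (fun p _ => hfiber p)
      _ = (Fintype.card (Fin d × Bool)) * ((2*d^2+3) * D^(d-1)) := by
          rw [Finset.sum_const, Finset.card_univ, smul_eq_mul]
      _ = 2*d*((2*d^2+3) * D^(d-1)) := by
          rw [Fintype.card_prod, Fintype.card_fin, Fintype.card_bool]
          ring
  show (({i : Fin d → Fin D | P i}).ncard : ℝ) ≤ _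
  rw [hncard]
  calc (T.card : ℝ) ≤ ((2*d*((2*d^2+3) * D^(d-1)) : ℕ) : ℝ) := by exact_mod_cast htotal
    _ = (2*d*(2*d^2+3) : ℝ) * (D:ℝ)^(d-1) := by push_cast; ring
end
end

section
/- For every integer d ≥ 2 there exists a constant c = c(d) > 0 such that for every positive integer n there is a subset A of the lattice cube [n]^d with |A| ≥ c·n such that no d+1 points of A lie on a common hyperplane and no 2d points of A lie on a common sphere. -/
open Matrix Polynomial

lemma transfer_dep {p : ℕ} [Fact p.Prime] {N k : ℕ}
    (M : Matrix (Fin N) (Fin k) ℤ) (u : Fin k → ℝ) (hu : u ≠ 0)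
    (hMu : (M.map (Int.cast : ℤ → ℝ)) *ᵥ u = 0) :
    ∃ y : Fin k → ZMod p, y ≠ 0 ∧ (M.map (Int.cast : ℤ → ZMod p)) *ᵥ y = 0 := by
  classical
  set F := ZMod p with hF
  set Mp := M.map (Int.cast : ℤ → F) with hMp
  by_contra hcon
  push_neg at hcon
  set rows : Fin N → (Fin k → F) := fun j => Mp j with hrows
  have hspan : Submodule.span F (Set.range rows) = ⊤ := by
    by_contra hne
    obtain ⟨x, hx⟩ : ∃ x, x ∉ Submodule.span F (Set.range rows) := by
      by_contra h
      push_neg at h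
      exact hne (Submodule.eq_top_iff'.2 h)
    obtain ⟨f, hf0, hfmap⟩ :=
      Submodule.exists_dual_map_eq_bot_of_notMem hx inferInstance
    set y : Fin k → F := fun i => f (fun j => if i = j then 1 else 0) with hy
    have hfv : ∀ v : Fin k → F, f v = ∑ i, v i * y i := by
      intro v
      rw [LinearMap.pi_apply_eq_sum_univ f v]
      simp [hy, smul_eq_mul]
    have hy0 : y ≠ 0 := by
      intro h0
      apply hf0
      rw [hfv x]
      simp [h0]
    refine hcon y hy0 ?_
    funext j
    have hrj : f (rows j) = 0 := by
      have hmem : rows j ∈ Submodule.span F (Set.range rows) :=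
        Submodule.subset_span (Set.mem_range_self j)
      have : f (rows j) ∈ Submodule.map f (Submodule.span F (Set.range rows)) :=
        Submodule.mem_map_of_mem hmem
      rw [hfmap] at this
      exact (Submodule.mem_bot F).mp this
    rw [hfv] at hrj
    simpa [Matrix.mulVec, dotProduct] using hrj
  -- spanning case
  obtain ⟨b, hbsub, hbspan, hbind⟩ := exists_linearIndependent F (Set.range rows)
  rw [hspan] at hbspan
  have hbfin : b.Finite := hbind.setFinite
  haveI : Fintype b := hbfin.fintype
  have hbbasis : Fintype.card b = k := by
    let B : Module.Basis b F (Fin k → F) := Module.Basis.mk hbind (by rw [Subtype.range_coe]; rw [hbspan])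
    have := Module.finrank_eq_card_basis B
    simpa [Module.finrank_fintype_fun_eq_card] using this.symm
  obtain ⟨e⟩ : Nonempty (Fin k ≃ b) := ⟨(Fintype.equivFinOfCardEq hbbasis).symm⟩
  have hrow : ∀ l : Fin k, ∃ j : Fin N, rows j = (e l : Fin k → F) := by
    intro l
    have : (e l : Fin k → F) ∈ b := (e l).2
    exact hbsub this
  choose ρ hρ using hrow
  set B : Matrix (Fin k) (Fin k) ℤ := fun l i => M (ρ l) i with hB
  have hBu : (B.map (Int.cast : ℤ → ℝ)) *ᵥ u = 0 := by
    funext l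
    have := congrFun hMu (ρ l)
    simpa [Matrix.mulVec, dotProduct, hB, Matrix.map] using this
  have hdetR : (B.map (Int.cast : ℤ → ℝ)).det = 0 :=
    Matrix.exists_mulVec_eq_zero_iff.mp ⟨u, hu, hBu⟩
  have hdetZ : B.det = 0 := by
    have h := RingHom.map_det (Int.castRingHom ℝ) B
    simp only [RingHom.mapMatrix_apply] at h
    have : ((B.det : ℤ) : ℝ) = 0 := by
      rw [show ((B.det : ℤ) : ℝ) = (Int.castRingHom ℝ) B.det from rfl, h]
      simpa using hdetR
    exact_mod_cast this
  have hdetF : (B.map (Int.cast : ℤ → F)).det = 0 := by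
    have h := RingHom.map_det (Int.castRingHom F) B
    simp only [RingHom.mapMatrix_apply] at h
    have : (B.map (Int.cast : ℤ → F)) = B.map ⇑(Int.castRingHom F) := rfl
    rw [this, ← h, hdetZ]
    simp
  obtain ⟨z, hz0, hz⟩ := Matrix.exists_vecMul_eq_zero_iff.mpr hdetF
  have hsum : ∑ l, z l • (e l : Fin k → F) = 0 := by
    funext i
    have := congrFun hz i
    simp only [Matrix.vecMul, dotProduct, Matrix.map_apply, hB, Pi.zero_apply] at this
    simp only [Finset.sum_apply, Pi.smul_apply, smul_eq_mul, Pi.zero_apply]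
    rw [← this]
    refine Finset.sum_congr rfl fun l _ => ?_
    have := congrFun (hρ l) i
    rw [← this]
    simp [hrows, hMp, Matrix.map]
  have hind : LinearIndependent F (fun l : Fin k => (e l : Fin k → F)) :=
    hbind.comp e e.injective
  have := Fintype.linearIndependent_iff.mp hind z hsum
  exact hz0 (funext this)

def Zc (p t i : ℕ) : ℤ := (((t : ZMod p) ^ (i + 1)).val : ℤ) + 1

def gam (p d : ℕ) (t : ℕ) : EuclideanSpace ℝ (Fin d) :=
  WithLp.toLp 2 (fun i : Fin d => ((Zc p t (i : ℕ) : ℤ) : ℝ))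

lemma Zc_pos (p t i : ℕ) : 1 ≤ Zc p t i := by
  unfold Zc
  have : (0:ℤ) ≤ (((t : ZMod p) ^ (i + 1)).val : ℤ) := Int.natCast_nonneg _
  omega

lemma Zc_le {p : ℕ} [Fact p.Prime] (t i : ℕ) : Zc p t i ≤ (p : ℤ) := by
  haveI : NeZero p := ⟨(Fact.out : p.Prime).pos.ne'⟩
  unfold Zc
  have := ZMod.val_lt ((t : ZMod p) ^ (i + 1))
  omega

lemma Zc_mod {p : ℕ} [Fact p.Prime] (t i : ℕ) :
    ((Zc p t i : ℤ) : ZMod p) = (t : ZMod p) ^ (i + 1) + 1 := by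
  haveI : NeZero p := ⟨(Fact.out : p.Prime).pos.ne'⟩
  unfold Zc
  push_cast
  rw [ZMod.natCast_val, ZMod.cast_id]

lemma gam_inj {p d m : ℕ} [Fact p.Prime] (hd : 1 ≤ d) (hmp : m < p) :
    Set.InjOn (gam p d) ↑(Finset.Icc 1 m) := by
  intro t ht t' ht' h
  simp only [Finset.coe_Icc, Set.mem_Icc] at ht ht'
  have h0 : ((Zc p t 0 : ℤ) : ℝ) = ((Zc p t' 0 : ℤ) : ℝ) :=
    congrArg (fun v : EuclideanSpace ℝ (Fin d) => v ⟨0, hd⟩) h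
  simp only [gam, Zc] at h0
  have h1 : ((t : ZMod p) ^ (0 + 1)).val + 1 = ((t' : ZMod p) ^ (0 + 1)).val + 1 := by
    exact_mod_cast h0
  simp only [zero_add, pow_one] at h1
  rw [ZMod.val_natCast_of_lt (lt_of_le_of_lt ht.2 hmp),
    ZMod.val_natCast_of_lt (lt_of_le_of_lt ht'.2 hmp)] at h1
  omega

lemma select {d : ℕ} [DecidableEq (EuclideanSpace ℝ (Fin d))] (hd : 1 ≤ d) {p m : ℕ} [Fact p.Prime] (hmp : m < p)
    (X : Set (EuclideanSpace ℝ (Fin d))) (N : ℕ)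
    (hN : N ≤ ((↑((Finset.Icc 1 m).image (gam p d)) : Set _) ∩ X).ncard) :
    ∃ ty : Fin N → ℕ, Function.Injective ty ∧
      ∀ j, (1 ≤ ty j ∧ ty j ≤ m) ∧ gam p d (ty j) ∈ X := by
  classical
  set S' : Finset ℕ := (Finset.Icc 1 m).filter (fun t => gam p d t ∈ X) with hS'
  have hset : (↑((Finset.Icc 1 m).image (gam p d)) : Set _) ∩ X
      = ↑(S'.image (gam p d)) := by
    ext x
    simp only [Set.mem_inter_iff, Finset.coe_image, Set.mem_image, Finset.mem_coe,
      hS', Finset.mem_filter, Finset.mem_Icc]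
    constructor
    · rintro ⟨⟨t, ht, rfl⟩, hx⟩
      exact ⟨t, ⟨ht, hx⟩, rfl⟩
    · rintro ⟨t, ⟨ht, hx⟩, rfl⟩
      exact ⟨⟨t, ht, rfl⟩, hx⟩
  rw [hset, Set.ncard_coe_finset] at hN
  have hcard : N ≤ S'.card := by
    refine hN.trans (Finset.card_image_le)
  obtain ⟨G, hGsub, hGcard⟩ := Finset.exists_subset_card_eq hcard
  have eG : Fin N ≃ {x // x ∈ G} := (G.equivFin.trans (finCongr hGcard)).symm
  refine ⟨fun j => (eG j : ℕ), ?_, ?_⟩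
  · intro a b hab
    exact eG.injective (Subtype.ext hab)
  · intro j
    have hmem : ((eG j : ℕ)) ∈ S' := hGsub (eG j).2
    simp only [hS', Finset.mem_filter, Finset.mem_Icc] at hmem
    exact ⟨hmem.1, hmem.2⟩

lemma tau_inj {p m N : ℕ} [Fact p.Prime] (hmp : m < p) (ty : Fin N → ℕ)
    (hty : Function.Injective ty) (hle : ∀ j, ty j ≤ m) :
    Function.Injective (fun j => ((ty j : ℕ) : ZMod p)) := by
  intro a b hab
  have ha := ZMod.val_natCast_of_lt (lt_of_le_of_lt (hle a) hmp)
  have hb := ZMod.val_natCast_of_lt (lt_of_le_of_lt (hle b) hmp)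
  apply hty
  have hab' : ((ty a : ℕ) : ZMod p) = ((ty b : ℕ) : ZMod p) := hab
  have : ((ty a : ℕ) : ZMod p).val = ((ty b : ℕ) : ZMod p).val := by rw [hab']
  rwa [ha, hb] at this

lemma gam_def (p d t : ℕ) (i : Fin d) : gam p d t i = ((Zc p t (i : ℕ) : ℤ) : ℝ) := rfl

lemma inner_euclidean {d : ℕ} (x y : EuclideanSpace ℝ (Fin d)) :
    (inner ℝ x y : ℝ) = ∑ i, x i * y i := by
  simp [PiLp.inner_apply, RCLike.inner_apply, conj_trivial, mul_comm]

lemma hyperplane_bound {d p m : ℕ} [Fact p.Prime] (hd : 2 ≤ d) (hmp : m < p)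
    (ty : Fin (d + 1) → ℕ) (hty : Function.Injective ty)
    (htym : ∀ j, 1 ≤ ty j ∧ ty j ≤ m)
    (H : AffineSubspace ℝ (EuclideanSpace ℝ (Fin d)))
    (hne : (H : Set (EuclideanSpace ℝ (Fin d))).Nonempty)
    (hrank : Module.finrank ℝ H.direction = d - 1)
    (hmem : ∀ j, gam p d (ty j) ∈ H) : False := by
  classical
  -- get a normal vector
  have hdirne : H.direction ≠ ⊤ := by
    intro h
    rw [h, finrank_top, finrank_euclideanSpace_fin] at hrank
    omega
  have hobot : H.directionᗮ ≠ ⊥ := by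
    intro h
    exact hdirne (Submodule.orthogonal_eq_bot_iff.mp h)
  obtain ⟨u', hu'mem, hu'ne⟩ := Submodule.ne_bot_iff _ |>.mp hobot
  obtain ⟨x0, hx0⟩ := hne
  set c0 : ℝ := inner ℝ u' x0 with hc0
  have hHeq : ∀ x ∈ H, (inner ℝ u' x : ℝ) = c0 := by
    intro x hx
    have hsub : x - x0 ∈ H.direction := AffineSubspace.vsub_mem_direction hx hx0
    have h0 : (inner ℝ u' (x - x0) : ℝ) = 0 :=
      Submodule.mem_orthogonal' _ u' |>.mp hu'mem _ hsub
    rw [inner_sub_right] at h0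
    rw [hc0]
    linarith
  -- the matrix and the real vector
  set u : Fin (d + 1) → ℝ := Fin.snoc (fun i : Fin d => u' i) (-c0) with hu
  have hune : u ≠ 0 := by
    intro h
    apply hu'ne
    have : ∀ i : Fin d, u' i = 0 := by
      intro i
      have := congrFun h (Fin.castSucc i)
      simpa [hu, Fin.snoc_castSucc] using this
    ext i
    exact this i
  set M : Matrix (Fin (d + 1)) (Fin (d + 1)) ℤ :=
    fun j => Fin.snoc (fun i : Fin d => Zc p (ty j) (i : ℕ)) 1 with hM
  have hMu : (M.map (Int.cast : ℤ → ℝ)) *ᵥ u = 0 := by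
    funext j
    have hj := hHeq _ (hmem j)
    rw [inner_euclidean] at hj
    simp only [Matrix.mulVec, dotProduct, Matrix.map_apply, Pi.zero_apply]
    rw [Fin.sum_univ_castSucc]
    simp only [hM, hu, Fin.snoc_castSucc, Fin.snoc_last, Int.cast_one]
    have : ∀ i : Fin d, ((Zc p (ty j) (i : ℕ) : ℤ) : ℝ) = gam p d (ty j) i := by
      intro i; rw [gam_def]
    calc (∑ i : Fin d, ((Zc p (ty j) (i : ℕ) : ℤ) : ℝ) * u' i) + 1 * (-c0)
        = (∑ i : Fin d, u' i * gam p d (ty j) i) - c0 := by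
          rw [Finset.sum_congr rfl fun i _ => by rw [this i, mul_comm]]
          ring
      _ = 0 := by rw [← hj]; ring
  obtain ⟨y, hy0, hy⟩ := transfer_dep (p := p) M u hune hMu
  -- the polynomial
  set Q : Fin (d + 1) → Polynomial (ZMod p) :=
    Fin.snoc (fun i : Fin d => X ^ ((i : ℕ) + 1) + 1) 1 with hQ
  set g : Polynomial (ZMod p) := ∑ i, C (y i) * Q i with hg
  have hbridge : ∀ (j : Fin (d + 1)) (i : Fin (d + 1)),
      (Q i).eval ((ty j : ℕ) : ZMod p) = ((M j i : ℤ) : ZMod p) := by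
    intro j i
    refine Fin.lastCases ?_ (fun i => ?_) i
    · simp [hQ, hM, Fin.snoc_last]
    · simp only [hQ, hM, Fin.snoc_castSucc, Zc_mod]
      simp
  have heval : ∀ j : Fin (d + 1), g.eval ((ty j : ℕ) : ZMod p) = 0 := by
    intro j
    have := congrFun hy j
    simp only [Matrix.mulVec, dotProduct, Matrix.map_apply, Pi.zero_apply] at this
    rw [hg, eval_finset_sum]
    rw [← this]
    refine Finset.sum_congr rfl fun i _ => ?_
    rw [eval_mul, eval_C, hbridge j i, mul_comm]
  have hdeg : g.natDegree ≤ d := by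
    rw [hg]
    refine natDegree_sum_le_of_forall_le _ _ fun i _ => ?_
    refine (natDegree_C_mul_le _ _).trans ?_
    refine Fin.lastCases ?_ (fun i => ?_) i
    · simp [hQ, Fin.snoc_last]
    · simp only [hQ, Fin.snoc_castSucc]
      refine (natDegree_add_le _ _).trans ?_
      simp [natDegree_X_pow]
  have hgz : g = 0 := by
    refine eq_zero_of_natDegree_lt_card_of_eval_eq_zero g
      (tau_inj hmp ty hty fun j => (htym j).2) heval ?_
    simpa using Nat.lt_succ_of_le hdeg
  -- coefficients
  have hcoeff : ∀ k : ℕ, (∑ i, y i * (Q i).coeff k) = 0 := by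
    intro k
    have := congrArg (fun q => Polynomial.coeff q k) hgz
    simp only [hg, finset_sum_coeff, coeff_C_mul, coeff_zero] at this
    exact this
  have hycs : ∀ c : Fin d, y (Fin.castSucc c) = 0 := by
    intro c
    have h := hcoeff ((c : ℕ) + 1)
    rw [Fin.sum_univ_castSucc] at h
    simp only [hQ, Fin.snoc_castSucc, Fin.snoc_last, coeff_add, coeff_X_pow, coeff_one] at h
    have hz1 : (1 : Polynomial (ZMod p)).coeff ((c : ℕ) + 1) = 0 := by
      simp [coeff_one]
    have hterm : ∀ i : Fin d, y (Fin.castSucc i) *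
        ((if (c:ℕ) + 1 = (i:ℕ) + 1 then (1:ZMod p) else 0) +
          if (c:ℕ) + 1 = 0 then 1 else 0) = if i = c then y (Fin.castSucc i) else 0 := by
      intro i
      by_cases hic : i = c
      · subst hic; simp
      · have h1 : ¬((c:ℕ) + 1 = (i:ℕ) + 1) := by
          simp only [Fin.ext_iff] at hic
          omega
        simp [h1, hic]
        exact fun h2 => absurd (Fin.ext h2).symm hic
    rw [Finset.sum_congr rfl (fun i _ => hterm i)] at h
    rw [Finset.sum_ite_eq' Finset.univ c (fun i => y (Fin.castSucc i))] at h
    simpa using h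
  have hylast : y (Fin.last d) = 0 := by
    have h := hcoeff 0
    rw [Fin.sum_univ_castSucc] at h
    simp only [hQ, Fin.snoc_castSucc, Fin.snoc_last, coeff_add, coeff_X_pow, coeff_one] at h
    simp only [hycs, zero_mul, Finset.sum_const_zero, zero_add] at h
    simpa using h
  apply hy0
  funext i
  refine Fin.lastCases ?_ (fun i => ?_) i
  · exact hylast
  · exact hycs i

lemma sphere_bound {d p m : ℕ} [Fact p.Prime] (hd : 2 ≤ d) (hmp : m < p)
    (h2dm : 2 * d * m < p)
    (ty : Fin (2 * d) → ℕ) (hty : Function.Injective ty)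
    (htym : ∀ j, 1 ≤ ty j ∧ ty j ≤ m)
    (ctr : EuclideanSpace ℝ (Fin d)) (r : ℝ)
    (hmem : ∀ j, gam p d (ty j) ∈ Metric.sphere ctr r) : False := by
  classical
  haveI : NeZero p := ⟨(Fact.out : p.Prime).pos.ne'⟩
  -- real sphere identity
  have hsph : ∀ x : EuclideanSpace ℝ (Fin d), x ∈ Metric.sphere ctr r →
      (∑ i, x i ^ 2) + (∑ i, (-2 * ctr i) * x i) + ((∑ i, ctr i ^ 2) - r ^ 2) = 0 := by
    intro x hx
    have hd' : dist x ctr = r := hx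
    have hn : ‖x - ctr‖ = r := by rwa [dist_eq_norm] at hd'
    have hin : (inner ℝ (x - ctr) (x - ctr) : ℝ) = r ^ 2 := by
      rw [real_inner_self_eq_norm_sq, hn]
    rw [inner_euclidean] at hin
    have hexp : ∀ i : Fin d, (x - ctr) i * (x - ctr) i
        = x i ^ 2 + (-2 * ctr i) * x i + ctr i ^ 2 := by
      intro i
      have : (x - ctr) i = x i - ctr i := rfl
      rw [this]; ring
    rw [Finset.sum_congr rfl fun i _ => hexp i] at hin
    rw [Finset.sum_add_distrib, Finset.sum_add_distrib] at hin
    linarith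
  -- the real vector and matrix
  set u : Fin (d + 2) → ℝ :=
    Fin.snoc (Fin.snoc (fun i : Fin d => -2 * ctr i) ((∑ i, ctr i ^ 2) - r ^ 2)) 1 with hu
  have hune : u ≠ 0 := by
    intro h
    have := congrFun h (Fin.last (d + 1))
    simp [hu, Fin.snoc_last] at this
  set M : Matrix (Fin (2 * d)) (Fin (d + 2)) ℤ :=
    fun j => Fin.snoc (Fin.snoc (fun i : Fin d => Zc p (ty j) (i : ℕ)) 1)
      (∑ i : Fin d, (Zc p (ty j) (i : ℕ)) ^ 2) with hM
  have hMu : (M.map (Int.cast : ℤ → ℝ)) *ᵥ u = 0 := by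
    funext j
    have hj := hsph _ (hmem j)
    simp only [Matrix.mulVec, dotProduct, Matrix.map_apply, Pi.zero_apply]
    rw [Fin.sum_univ_castSucc, Fin.sum_univ_castSucc]
    simp only [hM, hu, Fin.snoc_castSucc, Fin.snoc_last]
    have hg : ∀ i : Fin d, ((Zc p (ty j) (i : ℕ) : ℤ) : ℝ) = gam p d (ty j) i := by
      intro i; rw [gam_def]
    push_cast
    have e1 : ∀ i : Fin d, ((Zc p (ty j) (i : ℕ) : ℤ) : ℝ) * (-2 * ctr i)
        = -2 * ctr i * gam p d (ty j) i := by
      intro i; rw [hg i]; ring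
    have e2 : ∀ i : Fin d, ((Zc p (ty j) (i : ℕ) : ℤ) : ℝ) ^ 2
        = gam p d (ty j) i ^ 2 := by
      intro i; rw [hg i]
    rw [Finset.sum_congr rfl fun i _ => e1 i, Finset.sum_congr rfl fun i _ => e2 i]
    linarith [hj]
  obtain ⟨y, hy0, hy⟩ := transfer_dep (p := p) M u hune hMu
  set τ : Fin (2 * d) → ZMod p := fun j => ((ty j : ℕ) : ZMod p) with hτ
  have hτinj : Function.Injective τ := tau_inj hmp ty hty fun j => (htym j).2
  -- the polynomials
  set Q : Fin (d + 2) → Polynomial (ZMod p) :=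
    Fin.snoc (Fin.snoc (fun i : Fin d => X ^ ((i : ℕ) + 1) + 1) 1)
      (∑ i : Fin d, (X ^ ((i : ℕ) + 1) + 1) ^ 2) with hQ
  set f : Polynomial (ZMod p) := ∑ i, C (y i) * Q i with hf
  have hbridge : ∀ (j : Fin (2 * d)) (i : Fin (d + 2)),
      (Q i).eval (τ j) = ((M j i : ℤ) : ZMod p) := by
    intro j i
    refine Fin.lastCases ?_ (fun i => ?_) i
    · simp only [hQ, hM, Fin.snoc_last, hτ]
      push_cast
      rw [eval_finset_sum]
      refine Finset.sum_congr rfl fun i _ => ?_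
      rw [eval_pow]
      have hz : eval ((ty j : ℕ) : ZMod p) (X ^ ((i : ℕ) + 1) + 1)
          = ((Zc p (ty j) (i : ℕ) : ℤ) : ZMod p) := by
        rw [Zc_mod]; simp
      rw [hz]
    · refine Fin.lastCases ?_ (fun i' => ?_) i
      · simp [hQ, hM, Fin.snoc_castSucc, Fin.snoc_last]
      · simp only [hQ, hM, Fin.snoc_castSucc, hτ]
        rw [Zc_mod]
        simp
  have heval : ∀ j : Fin (2 * d), f.eval (τ j) = 0 := by
    intro j
    have := congrFun hy j
    simp only [Matrix.mulVec, dotProduct, Matrix.map_apply, Pi.zero_apply] at this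
    rw [hf, eval_finset_sum]
    rw [← this]
    refine Finset.sum_congr rfl fun i _ => ?_
    rw [eval_mul, eval_C, hbridge j i, mul_comm]
  have hcoeff : ∀ k : ℕ, f.coeff k = ∑ i, y i * (Q i).coeff k := by
    intro k
    simp only [hf, finset_sum_coeff, coeff_C_mul]
  -- coefficient facts about Q
  have hC2 : (C 2 : Polynomial (ZMod p)) = 2 := by
    have : (2 : ZMod p) = 1 + 1 := by norm_num
    rw [this, map_add, Polynomial.C_1]
    norm_num
  have hexp2 : ∀ k : ℕ, ((X : Polynomial (ZMod p)) ^ (k + 1) + 1) ^ 2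
      = X ^ (2 * (k + 1)) + C 2 * X ^ (k + 1) + 1 := by
    intro k
    rw [hC2]
    ring
  have hQlast : ∀ n : ℕ, (Q (Fin.last (d + 1))).coeff n
      = ∑ i : Fin d, ((if n = 2 * ((i : ℕ) + 1) then (1 : ZMod p) else 0)
        + 2 * (if n = (i : ℕ) + 1 then 1 else 0) + (if n = 0 then 1 else 0)) := by
    intro n
    simp only [hQ, Fin.snoc_last, finset_sum_coeff]
    refine Finset.sum_congr rfl fun i _ => ?_
    rw [hexp2, coeff_add, coeff_add, coeff_X_pow, coeff_C_mul, coeff_X_pow, coeff_one]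
  have hQl2d : (Q (Fin.last (d + 1))).coeff (2 * d) = 1 := by
    rw [hQlast]
    have hterm : ∀ i : Fin d, ((if 2 * d = 2 * ((i : ℕ) + 1) then (1 : ZMod p) else 0)
        + 2 * (if 2 * d = (i : ℕ) + 1 then 1 else 0) + (if 2 * d = 0 then 1 else 0))
        = if i = (⟨d - 1, by omega⟩ : Fin d) then 1 else 0 := by
      intro i
      have hi := i.isLt
      by_cases hic : i = (⟨d - 1, by omega⟩ : Fin d)
      · rw [hic]
        have h1 : 2 * d = 2 * (((⟨d - 1, by omega⟩ : Fin d) : ℕ) + 1) := by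
          simp; omega
        have h2 : ¬(2 * d = (((⟨d - 1, by omega⟩ : Fin d) : ℕ)) + 1) := by
          simp; omega
        have h3 : ¬(2 * d = 0) := by omega
        simp [h1, h2, h3]
      · have hic' : (i : ℕ) ≠ d - 1 := by
          simpa [Fin.ext_iff] using hic
        have h1 : ¬(2 * d = 2 * ((i : ℕ) + 1)) := by omega
        have h2 : ¬(2 * d = (i : ℕ) + 1) := by omega
        have h3 : ¬(2 * d = 0) := by omega
        simp [h1, h2, h3, hic]
    rw [Finset.sum_congr rfl fun i _ => hterm i,
      Finset.sum_ite_eq' Finset.univ _ (fun _ => (1 : ZMod p))]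
    simp
  have hQl2d1 : (Q (Fin.last (d + 1))).coeff (2 * d - 1) = 0 := by
    rw [hQlast]
    refine Finset.sum_eq_zero fun i _ => ?_
    have hi := i.isLt
    have h1 : ¬(2 * d - 1 = 2 * ((i : ℕ) + 1)) := by omega
    have h2 : ¬(2 * d - 1 = (i : ℕ) + 1) := by omega
    have h3 : ¬(2 * d - 1 = 0) := by omega
    simp [h1, h2, h3]
  have hQcs2d : ∀ (i : Fin (d + 1)) (n : ℕ), d < n →
      (Q (Fin.castSucc i)).coeff n = 0 := by
    intro i n hn
    refine Fin.lastCases ?_ (fun i' => ?_) i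
    · simp only [hQ, Fin.snoc_castSucc, Fin.snoc_last]
      rw [coeff_one]
      have : ¬(n = 0) := by omega
      simp [this]
    · simp only [hQ, Fin.snoc_castSucc]
      rw [coeff_add, coeff_X_pow, coeff_one]
      have hi := i'.isLt
      have h1 : ¬(n = (i' : ℕ) + 1) := by omega
      have h2 : ¬(n = 0) := by omega
      simp [h1, h2]
  -- degree bound
  have hdegQ : ∀ i : Fin (d + 2), (Q i).natDegree ≤ 2 * d := by
    intro i
    refine Fin.lastCases ?_ (fun i => ?_) i
    · simp only [hQ, Fin.snoc_last]
      refine natDegree_sum_le_of_forall_le _ _ fun i _ => ?_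
      refine (natDegree_pow_le).trans ?_
      have : (X ^ ((i : ℕ) + 1) + 1 : Polynomial (ZMod p)).natDegree ≤ (i : ℕ) + 1 := by
        refine (natDegree_add_le _ _).trans ?_
        simp [natDegree_X_pow]
      have hi := i.isLt
      calc 2 * (X ^ ((i : ℕ) + 1) + 1 : Polynomial (ZMod p)).natDegree
          ≤ 2 * ((i : ℕ) + 1) := by omega
        _ ≤ 2 * d := by omega
    · refine Fin.lastCases ?_ (fun i' => ?_) i
      · simp [hQ, Fin.snoc_castSucc, Fin.snoc_last]
      · simp only [hQ, Fin.snoc_castSucc]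
        refine (natDegree_add_le _ _).trans ?_
        have hi := i'.isLt
        simp [natDegree_X_pow]
        omega
  have hdegf : f.natDegree ≤ 2 * d := by
    rw [hf]
    refine natDegree_sum_le_of_forall_le _ _ fun i _ => ?_
    exact (natDegree_C_mul_le _ _).trans (hdegQ i)
  set a : ZMod p := y (Fin.last (d + 1)) with ha
  by_cases haz : a = 0
  · -- low degree case : f = 0 and all coefficients of y vanish
    have hdegf' : f.natDegree ≤ d := by
      rw [hf]
      refine natDegree_sum_le_of_forall_le _ _ fun i _ => ?_
      refine Fin.lastCases ?_ (fun i => ?_) i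
      · rw [← ha] at *
        rw [haz]
        simp
      · refine (natDegree_C_mul_le _ _).trans ?_
        refine Fin.lastCases ?_ (fun i' => ?_) i
        · simp [hQ, Fin.snoc_castSucc, Fin.snoc_last]
        · simp only [hQ, Fin.snoc_castSucc]
          refine (natDegree_add_le _ _).trans ?_
          have hi := i'.isLt
          simp [natDegree_X_pow]
    have hfz : f = 0 := by
      refine eq_zero_of_natDegree_lt_card_of_eval_eq_zero f hτinj heval ?_
      simp only [Fintype.card_fin]
      omega
    have hcz : ∀ k : ℕ, (∑ i, y i * (Q i).coeff k) = 0 := by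
      intro k
      rw [← hcoeff, hfz, coeff_zero]
    have hycs : ∀ c : Fin d, y ((Fin.castSucc c).castSucc) = 0 := by
      intro c
      have h := hcz ((c : ℕ) + 1)
      rw [Fin.sum_univ_castSucc, Fin.sum_univ_castSucc] at h
      rw [← ha, haz, zero_mul, add_zero] at h
      simp only [hQ, Fin.snoc_castSucc, Fin.snoc_last] at h
      rw [coeff_one] at h
      have hne0 : ¬((c : ℕ) + 1 = 0) := by omega
      rw [if_neg hne0, mul_zero, add_zero] at h
      have hterm : ∀ i : Fin d, y ((Fin.castSucc i).castSucc) *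
          (X ^ ((i : ℕ) + 1) + 1 : Polynomial (ZMod p)).coeff ((c : ℕ) + 1)
          = if i = c then y ((Fin.castSucc i).castSucc) else 0 := by
        intro i
        rw [coeff_add, coeff_X_pow, coeff_one]
        by_cases hic : i = c
        · subst hic; simp
        · have h1 : ¬((c : ℕ) + 1 = (i : ℕ) + 1) := by
            simp only [Fin.ext_iff] at hic
            omega
          have h2 : ¬((c : ℕ) + 1 = 0) := by omega
          simp [h1, h2, hic]
          exact fun h3 => absurd (Fin.ext h3).symm hic
      rw [Finset.sum_congr rfl fun i _ => hterm i,
        Finset.sum_ite_eq' Finset.univ c (fun i => y ((Fin.castSucc i).castSucc))] at h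
      simpa using h
    have hymid : y ((Fin.last d).castSucc) = 0 := by
      have h := hcz 0
      rw [Fin.sum_univ_castSucc, Fin.sum_univ_castSucc] at h
      rw [← ha, haz, zero_mul, add_zero] at h
      simp only [hQ, Fin.snoc_castSucc, Fin.snoc_last] at h
      rw [coeff_one, if_pos rfl, mul_one] at h
      have hterm : ∀ i : Fin d, y ((Fin.castSucc i).castSucc) *
          (X ^ ((i : ℕ) + 1) + 1 : Polynomial (ZMod p)).coeff 0 = 0 := by
        intro i
        rw [hycs i, zero_mul]
      rw [Finset.sum_congr rfl fun i _ => hterm i] at h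
      simpa using h
    apply hy0
    funext i
    refine Fin.lastCases ?_ (fun i => ?_) i
    · rw [← ha]; exact haz
    · refine Fin.lastCases ?_ (fun i' => ?_) i
      · exact hymid
      · exact hycs i'
  · -- main case : compare with the product polynomial
    have hc2d : f.coeff (2 * d) = a := by
      rw [hcoeff, Fin.sum_univ_castSucc]
      rw [hQl2d, ← ha, mul_one]
      have hterm : ∀ i : Fin (d + 1), y (Fin.castSucc i) *
          (Q (Fin.castSucc i)).coeff (2 * d) = 0 := by
        intro i
        rw [hQcs2d i (2 * d) (by omega), mul_zero]
      rw [Finset.sum_congr rfl fun i _ => hterm i]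
      simp
    have hc2d1 : f.coeff (2 * d - 1) = 0 := by
      rw [hcoeff, Fin.sum_univ_castSucc]
      rw [hQl2d1, mul_zero, add_zero]
      refine Finset.sum_eq_zero fun i _ => ?_
      rw [hQcs2d i (2 * d - 1) (by omega), mul_zero]
    set P : Polynomial (ZMod p) := ∏ j : Fin (2 * d), (X - C (τ j)) with hP
    have hPmonic : P.Monic := monic_prod_of_monic _ _ fun _ _ => monic_X_sub_C _
    have hPdeg : P.natDegree = 2 * d := by
      rw [hP, natDegree_prod_of_monic _ _ fun _ _ => monic_X_sub_C _]
      simp [natDegree_X_sub_C]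
    set h : Polynomial (ZMod p) := C a * P with hh
    have hhdeg : h.natDegree ≤ 2 * d := by
      rw [hh]
      exact (natDegree_C_mul_le _ _).trans hPdeg.le
    have hhc2d : h.coeff (2 * d) = a := by
      rw [hh, coeff_C_mul, ← hPdeg, hPmonic.coeff_natDegree, mul_one]
    have hheval : ∀ j : Fin (2 * d), h.eval (τ j) = 0 := by
      intro j
      rw [hh, eval_mul, hP, eval_prod]
      rw [Finset.prod_eq_zero (Finset.mem_univ j) (by simp), mul_zero]
    have hfh : f = h := by
      set g2 : Polynomial (ZMod p) := f - h with hg2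
      by_cases hg2z : g2 = 0
      · have := sub_eq_zero.mp hg2z
        exact this
      · exfalso
        have hdeg2 : g2.natDegree ≤ 2 * d := by
          rw [hg2]
          exact (natDegree_sub_le _ _).trans (by omega)
        have hco2 : g2.coeff (2 * d) = 0 := by
          rw [hg2, coeff_sub, hc2d, hhc2d, sub_self]
        have hdlt : g2.natDegree < 2 * d := by
          rcases lt_or_eq_of_le hdeg2 with h' | h'
          · exact h'
          · exfalso
            apply hg2z
            rw [← leadingCoeff_eq_zero, leadingCoeff, h', hco2]
        have : g2 = 0 := by
          refine eq_zero_of_natDegree_lt_card_of_eval_eq_zero g2 hτinj ?_ ?_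
          · intro j
            rw [hg2, eval_sub, heval j, hheval j, sub_self]
          · simpa using hdlt
        exact hg2z this
    -- extract the sum of roots
    have hPc : P.coeff (2 * d - 1) = -∑ j : Fin (2 * d), τ j := by
      have := prod_X_sub_C_coeff_card_pred (Finset.univ : Finset (Fin (2 * d))) τ
        (by simp; omega)
      simpa using this
    have hsum0 : (∑ j : Fin (2 * d), τ j) = 0 := by
      have h0 : (0 : ZMod p) = a * -∑ j : Fin (2 * d), τ j := by
        rw [← hc2d1, hfh, hh, coeff_C_mul, hPc]
      rcases mul_eq_zero.mp h0.symm with h' | h'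
      · exact absurd h' haz
      · simpa using h'
    -- numeric contradiction
    have hsumnat : ((∑ j : Fin (2 * d), ty j : ℕ) : ZMod p) = 0 := by
      rw [Nat.cast_sum]
      exact hsum0
    have hdvd : p ∣ ∑ j : Fin (2 * d), ty j := by
      rwa [ZMod.natCast_eq_zero_iff] at hsumnat
    have hub : (∑ j : Fin (2 * d), ty j) ≤ 2 * d * m := by
      calc (∑ j : Fin (2 * d), ty j) ≤ ∑ _j : Fin (2 * d), m :=
            Finset.sum_le_sum fun j _ => (htym j).2
        _ = 2 * d * m := by simp [Finset.sum_const, mul_comm]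
    have hlb : 1 ≤ ∑ j : Fin (2 * d), ty j := by
      have hj0 : (⟨0, by omega⟩ : Fin (2 * d)) ∈ Finset.univ := Finset.mem_univ _
      calc 1 ≤ ty ⟨0, by omega⟩ := (htym _).1
        _ ≤ ∑ j : Fin (2 * d), ty j :=
            Finset.single_le_sum (fun j _ => Nat.zero_le _) hj0
    have := Nat.le_of_dvd (by omega) hdvd
    omega

noncomputable section

/-- The lattice cube `[n]^d`: points of `ℝ^d` all of whose coordinates are
integers in `{1, …, n}`. -/
def latticeCube (d n : ℕ) : Set (EuclideanSpace ℝ (Fin d)) :=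
  {x | ∀ i, ∃ k : ℤ, 1 ≤ k ∧ k ≤ (n : ℤ) ∧ x i = (k : ℝ)}

theorem stmt9 (d : ℕ) (hd : 2 ≤ d) :
    ∃ c : ℝ, 0 < c ∧ ∀ n : ℕ, 0 < n →
      ∃ A : Set (EuclideanSpace ℝ (Fin d)), A ⊆ latticeCube d n ∧ A.Finite ∧
        c * (n : ℝ) ≤ (A.ncard : ℝ) ∧
        (∀ H : AffineSubspace ℝ (EuclideanSpace ℝ (Fin d)),
          (H : Set (EuclideanSpace ℝ (Fin d))).Nonempty →
          Module.finrank ℝ H.direction = d - 1 →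
          (A ∩ (H : Set (EuclideanSpace ℝ (Fin d)))).ncard ≤ d) ∧
        (∀ (ctr : EuclideanSpace ℝ (Fin d)) (r : ℝ), 0 < r →
          (A ∩ Metric.sphere ctr r).ncard ≤ 2 * d - 1) := by
  classical
  have hdR : (2 : ℝ) ≤ (d : ℝ) := by exact_mod_cast hd
  have hdpos : (0 : ℝ) < (d : ℝ) := by linarith
  refine ⟨1 / (20 * (d : ℝ) * (d : ℝ)), by positivity, ?_⟩
  intro n hn
  by_cases hsmall : n < 20 * d * d
  · -- small case : a single point
    set pt : EuclideanSpace ℝ (Fin d) := WithLp.toLp 2 (fun _ => (1 : ℝ)) with hpt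
    refine ⟨{pt}, ?_, Set.finite_singleton pt, ?_, ?_, ?_⟩
    · intro x hx
      rw [Set.mem_singleton_iff] at hx
      subst hx
      intro i
      exact ⟨1, le_refl _, by exact_mod_cast hn, by norm_num⟩
    · rw [Set.ncard_singleton]
      have hnlt : (n : ℝ) < 20 * (d : ℝ) * (d : ℝ) := by exact_mod_cast hsmall
      rw [div_mul_eq_mul_div, div_le_iff₀ (by positivity)]
      push_cast
      linarith
    · intro H _ _
      calc ({pt} ∩ (H : Set (EuclideanSpace ℝ (Fin d)))).ncard
          ≤ ({pt} : Set (EuclideanSpace ℝ (Fin d))).ncard :=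
            Set.ncard_le_ncard Set.inter_subset_left (Set.finite_singleton pt)
        _ = 1 := Set.ncard_singleton pt
        _ ≤ d := by omega
    · intro ctr r _
      calc ({pt} ∩ Metric.sphere ctr r).ncard
          ≤ ({pt} : Set (EuclideanSpace ℝ (Fin d))).ncard :=
            Set.ncard_le_ncard Set.inter_subset_left (Set.finite_singleton pt)
        _ = 1 := Set.ncard_singleton pt
        _ ≤ 2 * d - 1 := by omega
  · -- large case
    push_neg at hsmall
    have hdd : 2 * d ≤ d * d := Nat.mul_le_mul_right d hd
    -- Bertrand
    have h80 : 80 ≤ n := by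
      have h1 : 20 * 2 ≤ 20 * d := Nat.mul_le_mul_left 20 hd
      have h2 : (20 * 2) * 2 ≤ (20 * d) * d := Nat.mul_le_mul h1 hd
      omega
    have hn2 : n / 2 ≠ 0 := by omega
    obtain ⟨p, hpp, hplb, hpub⟩ := Nat.exists_prime_lt_and_le_two_mul (n / 2) hn2
    haveI : Fact p.Prime := ⟨hpp⟩
    have hppos : 0 < p := hpp.pos
    have hpn : p ≤ n := le_trans hpub (by omega)
    set m : ℕ := p / (2 * d + 1) with hm
    have hrem := Nat.div_add_mod p (2 * d + 1)
    rw [← hm] at hrem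
    have hremlt : p % (2 * d + 1) < 2 * d + 1 := Nat.mod_lt _ (by omega)
    have hpbig : 2 * d + 1 ≤ p := by
      have h1 : 10 * (d * d) ≤ n / 2 := by
        rw [Nat.le_div_iff_mul_le (by omega)]
        calc 10 * (d * d) * 2 = 20 * d * d := by ring
          _ ≤ n := hsmall
      have h2 : 2 * d + 1 ≤ 10 * (d * d) := by omega
      omega
    have hm1 : 1 ≤ m := by
      rw [hm]
      rw [Nat.le_div_iff_mul_le (by omega)]
      omega
    have hmp : m < p := Nat.div_lt_self hppos (by omega)
    have hple : (2 * d + 1) * m ≤ p := by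
      calc (2 * d + 1) * m ≤ (2 * d + 1) * m + p % (2 * d + 1) := Nat.le_add_right _ _
        _ = p := hrem
    have h2dm : 2 * d * m < p := by
      calc 2 * d * m < 2 * d * m + m := by omega
        _ = (2 * d + 1) * m := by ring
        _ ≤ p := hple
    set A : Set (EuclideanSpace ℝ (Fin d)) :=
      ↑((Finset.Icc 1 m).image (gam p d)) with hA
    have hAncard : A.ncard = m := by
      rw [hA, Set.ncard_coe_finset,
        Finset.card_image_of_injOn (gam_inj (by omega) hmp), Nat.card_Icc]
      omega
    refine ⟨A, ?_, Finset.finite_toSet _, ?_, ?_, ?_⟩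
    · -- lattice cube
      intro x hx
      rw [hA] at hx
      simp only [Finset.coe_image, Set.mem_image, Finset.mem_coe] at hx
      obtain ⟨t, _, rfl⟩ := hx
      intro i
      refine ⟨Zc p t (i : ℕ), Zc_pos p t (i : ℕ), ?_, (gam_def p d t i)⟩
      calc Zc p t (i : ℕ) ≤ (p : ℤ) := Zc_le t (i : ℕ)
        _ ≤ (n : ℤ) := by exact_mod_cast hpn
    · -- cardinality
      rw [hAncard]
      rw [div_mul_eq_mul_div, div_le_iff₀ (by positivity)]
      have c1 : (n : ℝ) < 2 * (p : ℝ) := by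
        have : n < 2 * p := by omega
        exact_mod_cast this
      have c2 : (p : ℝ) ≤ (2 * (d : ℝ) + 1) * (m : ℝ) + 2 * (d : ℝ) := by
        have h1 : p ≤ (2 * d + 1) * m + 2 * d := by
          calc p = (2 * d + 1) * m + p % (2 * d + 1) := hrem.symm
            _ ≤ (2 * d + 1) * m + 2 * d := by omega
        exact_mod_cast h1
      have c3 : (1 : ℝ) ≤ (m : ℝ) := by exact_mod_cast hm1
      nlinarith [mul_le_mul_of_nonneg_left c3 (by positivity : (0:ℝ) ≤ (d:ℝ) * (d:ℝ))]
    · -- hyperplanes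
      intro H hne hrank
      by_contra hcon
      push_neg at hcon
      have hsel : d + 1 ≤ (A ∩ (H : Set (EuclideanSpace ℝ (Fin d)))).ncard := hcon
      obtain ⟨ty, htyinj, hty⟩ := select (by omega) hmp (H : Set (EuclideanSpace ℝ (Fin d)))
        (d + 1) hsel
      exact hyperplane_bound hd hmp ty htyinj (fun j => (hty j).1) H hne hrank
        (fun j => (hty j).2)
    · -- spheres
      intro ctr r _
      by_contra hcon
      push_neg at hcon
      have hd1 : 2 * d - 1 + 1 = 2 * d := by omega
      have hsel : 2 * d ≤ (A ∩ Metric.sphere ctr r).ncard := by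
        rw [← hd1]; exact hcon
      obtain ⟨ty, htyinj, hty⟩ := select (by omega) hmp (Metric.sphere ctr r) (2 * d) hsel
      exact sphere_bound hd hmp h2dm ty htyinj (fun j => (hty j).1) ctr r
        (fun j => (hty j).2)
end
end
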